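/- arXiv:1602.07374 — 6 statements merged into one kernel-verified Lean document; each statement's English description precedes it below -/
import Mathlib

section
/- The cube-connected cycles graph CC_n is isomorphic to Q_n(1,n), i.e., cube-connected cycles are recursive cubes of rings with d = 1 and r = n. -/
/-- The standard basis vector `e_j` of `F₂ⁿ`, with index taken in `ℤ_n`
(so `e_0 = e_n` etc.): the vector with a `1` exactly in the coordinates
`k` with `k ≡ j (mod n)`. -/
def Ebasis (n : ℕ) (j : ZMod n) : Fin n → ZMod 2 :=
  fun k => if ((k : ℕ) : ZMod n) = j then 1 else 0

/-- The adjacency rule of the recursive cube of rings `Q_n(d,r)`: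
`(a,x)` is joined to `(a, x+1)` (ring edges, symmetrized below) and to
`(a + e_{i+dx}, x)` for `1 ≤ i ≤ d` (cube edges). -/
def rcrRel (n d r : ℕ) (p q : (Fin n → ZMod 2) × ZMod r) : Prop :=
  (p.1 = q.1 ∧ q.2 = p.2 + 1) ∨
  (p.2 = q.2 ∧ ∃ i : ℕ, 1 ≤ i ∧ i ≤ d ∧
    q.1 = p.1 + Ebasis n ((i : ZMod n) + (d : ZMod n) * ((p.2.val : ℕ) : ZMod n)))

/-- The recursive cube of rings `Q_n(d,r)`, as a simple graph on
`ℤ₂ⁿ × ℤ_r` (the underlying set of `G = ℤ₂ⁿ ⋊_φ ℤ_r`). -/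
def RCR (n d r : ℕ) : SimpleGraph ((Fin n → ZMod 2) × ZMod r) :=
  SimpleGraph.fromRel (rcrRel n d r)

/-- Adjacency rule of the cube-connected cycles `CC_n`: on `ℤ₂ⁿ × ℤ_n`,
`(a,x)` is joined to `(a, x±1)` (symmetrization of `x+1`) and to
`(a + e_{1+x}, x)`. -/
def cccRel (n : ℕ) (p q : (Fin n → ZMod 2) × ZMod n) : Prop :=
  (p.1 = q.1 ∧ q.2 = p.2 + 1) ∨
  (p.2 = q.2 ∧ q.1 = p.1 + Ebasis n ((1 : ZMod n) + ((p.2.val : ℕ) : ZMod n)))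

/-- The cube-connected cycles graph `CC_n`. -/
def CCC (n : ℕ) : SimpleGraph ((Fin n → ZMod 2) × ZMod n) :=
  SimpleGraph.fromRel (cccRel n)

lemma rel_iff (n : ℕ) (p q : (Fin n → ZMod 2) × ZMod n) :
    cccRel n p q ↔ rcrRel n 1 n p q := by
  unfold cccRel rcrRel
  constructor
  · rintro (h | ⟨h1, h2⟩)
    · exact Or.inl h
    · refine Or.inr ⟨h1, 1, le_refl 1, le_refl 1, ?_⟩
      simpa using h2
  · rintro (h | ⟨h1, i, hi1, hi2, h2⟩)
    · exact Or.inl h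
    · have : i = 1 := le_antisymm hi2 hi1
      subst this
      refine Or.inr ⟨h1, ?_⟩
      simpa using h2

/-- `CC_n ≅ Q_n(1,n)`: cube-connected cycles are recursive cubes
of rings with `d = 1` and `r = n`. -/
theorem stmt_5 (n : ℕ) (hn : 2 ≤ n) : Nonempty (CCC n ≃g RCR n 1 n) := by
  refine ⟨⟨Equiv.refl _, ?_⟩⟩
  intro p q
  simp only [Equiv.refl_apply, RCR, CCC, SimpleGraph.fromRel_adj]
  rw [rel_iff, rel_iff]
end

section
/- For any connected graph X, the bisection width satisfies bw(X) ≥ ⌊|V(X)|²/2⌋ / π(X). -/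
/-- for a connected graph `X`,
`bw(X) ≥ ⌊|V(X)|²/2⌋ / π(X)`, stated multiplicatively as
`bw(X)·π(X) ≥ ⌊|V(X)|²/2⌋`.  Here `π(X)` is the edge-forwarding index (the
least `m` such that some routing by paths loads every edge at most `m` times)
and `bw(X)` is the bisection width (the least size of a cut `δ(U,Ū)` over
partitions with `||U| − |Ū|| ≤ 1`). -/
theorem stmt_14 {V : Type*} [Fintype V] [DecidableEq V] (X : SimpleGraph V)
    (hconn : X.Connected)
    (piX : ℕ)
    (hpi : IsLeast {m : ℕ | ∃ R : ∀ u v : V, X.Walk u v,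
        (∀ u v, (R u v).IsPath) ∧
        ∀ e : Sym2 V,
          Nat.card {p : V × V // p.1 ≠ p.2 ∧ e ∈ (R p.1 p.2).edges} ≤ m} piX)
    (bwX : ℕ)
    (hbw : IsLeast {c : ℕ | ∃ U : Finset V,
        (U.card ≤ Uᶜ.card + 1 ∧ Uᶜ.card ≤ U.card + 1) ∧
        c = Nat.card {p : V × V // X.Adj p.1 p.2 ∧ p.1 ∈ U ∧ p.2 ∉ U}} bwX) :
    Fintype.card V ^ 2 / 2 ≤ bwX * piX := by
  classical
  obtain ⟨R, hpath, hload⟩ := hpi.1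
  obtain ⟨U, ⟨h1, h2⟩, hbwval⟩ := hbw.1
  -- the set of crossing ordered pairs
  set P : Finset (V × V) := (U ×ˢ Uᶜ) ∪ (Uᶜ ×ˢ U) with hP
  have hPcard : P.card = 2 * (U.card * Uᶜ.card) := by
    rw [hP, Finset.card_union_of_disjoint, Finset.card_product, Finset.card_product,
      Finset.card_compl]
    · ring
    · rw [Finset.disjoint_left]
      rintro ⟨a, b⟩ h h'
      simp only [Finset.mem_product, Finset.mem_compl] at h h'
      exact h'.1 h.1
  -- each crossing pair's path contains a boundary dart
  have key : ∀ p ∈ P, ∃ d : X.Dart,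
      d.edge ∈ (R p.1 p.2).edges ∧ d.fst ∈ U ∧ d.snd ∉ U := by
    rintro ⟨u, v⟩ hp
    simp only [hP, Finset.mem_union, Finset.mem_product, Finset.mem_compl] at hp
    rcases hp with ⟨hu, hv⟩ | ⟨hu, hv⟩
    · obtain ⟨d, hd, hd1, hd2⟩ :=
        (R u v).exists_boundary_dart (↑U : Set V) (by simpa) (by simpa)
      exact ⟨d, List.mem_map_of_mem hd, hd1, hd2⟩
    · obtain ⟨d, hd, hd1, hd2⟩ :=
        (R u v).exists_boundary_dart ((↑U : Set V)ᶜ) (by simpa) (by simpa)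
      refine ⟨d.symm, ?_, ?_, ?_⟩
      · rw [SimpleGraph.Dart.edge_symm]
        exact List.mem_map_of_mem hd
      · simpa using hd2
      · simpa using hd1
  -- the assignment of a cut edge to each crossing pair
  set f : V × V → Sym2 V := fun p =>
    if h : p ∈ P then ((key p h).choose).edge else s(p.1, p.1) with hf
  -- the set of cut edges
  set CutE : Finset (Sym2 V) :=
    Finset.image (fun q : V × V => s(q.1, q.2))
      (Finset.univ.filter fun q : V × V => X.Adj q.1 q.2 ∧ q.1 ∈ U ∧ q.2 ∉ U) with hCutE
  have hmaps : ∀ p ∈ P, f p ∈ CutE := by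
    intro p hp
    obtain ⟨hmem, hfst, hsnd⟩ := (key p hp).choose_spec
    set d := (key p hp).choose
    have : f p = s(d.fst, d.snd) := by
      simp [hf, hp]
      rfl
    rw [this, hCutE, Finset.mem_image]
    exact ⟨(d.fst, d.snd), by simp [hfst, hsnd, d.adj], rfl⟩
  -- counting cardinalities of subtypes by filters
  have hcard : ∀ (Q : V × V → Prop) [DecidablePred Q],
      Nat.card {p : V × V // Q p} = (Finset.univ.filter Q).card := by
    intro Q _
    rw [Nat.card_eq_fintype_card, Fintype.card_subtype]
  -- fiber bound
  have hfiber : ∀ e ∈ CutE, (P.filter fun p => f p = e).card ≤ piX := by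
    intro e _
    have hsub : (P.filter fun p => f p = e) ⊆
        Finset.univ.filter fun p : V × V => p.1 ≠ p.2 ∧ e ∈ (R p.1 p.2).edges := by
      intro p hp
      rw [Finset.mem_filter] at hp
      obtain ⟨hpP, hpe⟩ := hp
      obtain ⟨hmem, hfst, hsnd⟩ := (key p hpP).choose_spec
      have hne : p.1 ≠ p.2 := by
        simp only [hP, Finset.mem_union, Finset.mem_product, Finset.mem_compl] at hpP
        rintro h
        rcases hpP with ⟨ha, hb⟩ | ⟨ha, hb⟩
        · exact hb (h ▸ ha)
        · exact ha (h ▸ hb)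
      have hfp : f p = ((key p hpP).choose).edge := by simp [hf, hpP]
      rw [Finset.mem_filter]
      exact ⟨Finset.mem_univ _, hne, by rw [← hpe, hfp]; exact hmem⟩
    calc (P.filter fun p => f p = e).card
        ≤ (Finset.univ.filter fun p : V × V =>
            p.1 ≠ p.2 ∧ e ∈ (R p.1 p.2).edges).card := Finset.card_le_card hsub
      _ = Nat.card {p : V × V // p.1 ≠ p.2 ∧ e ∈ (R p.1 p.2).edges} := (hcard _).symm
      _ ≤ piX := hload e
  -- the number of cut edges is at most bwX
  have hCutEcard : CutE.card ≤ bwX := by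
    rw [hbwval, hcard]
    exact Finset.card_image_le
  -- arithmetic: balanced partition gives many crossing pairs
  have harith' : ∀ a b : ℕ, a ≤ b + 1 → b ≤ a + 1 → (a + b) ^ 2 / 2 ≤ 2 * (a * b) := by
    intro a b ha hb
    rcases (by omega : b = a ∨ b = a + 1 ∨ a = b + 1) with h | h | h
    · rw [h]
      have : (a + a) ^ 2 = 2 * (2 * (a * a)) := by ring
      omega
    · rw [h]
      have : (a + (a + 1)) ^ 2 = 2 * (2 * (a * (a + 1))) + 1 := by ring
      omega
    · rw [h]
      have : ((b + 1) + b) ^ 2 = 2 * (2 * ((b + 1) * b)) + 1 := by ring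
      omega
  have harith : Fintype.card V ^ 2 / 2 ≤ 2 * (U.card * Uᶜ.card) := by
    have hn : U.card + Uᶜ.card = Fintype.card V := Finset.card_add_card_compl U
    rw [← hn]
    exact harith' _ _ h1 h2
  calc Fintype.card V ^ 2 / 2 ≤ 2 * (U.card * Uᶜ.card) := harith
    _ = P.card := hPcard.symm
    _ = ∑ e ∈ CutE, (P.filter fun p => f p = e).card :=
        Finset.card_eq_sum_card_fiberwise hmaps
    _ ≤ ∑ _e ∈ CutE, piX := Finset.sum_le_sum hfiber
    _ = CutE.card * piX := by rw [Finset.sum_const, smul_eq_mul]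
    _ ≤ bwX * piX := Nat.mul_le_mul_right _ hCutEcard
end

section
/- Let dr ≡ 0 (mod n), r ≥ 3. Let U = {(a,x) : aₙ = 1} and Ū = {(a,x) : aₙ = 0} in Q_n(d,r). Then {U, Ū} is a bisection and |δ(U,Ū)| = 2^{n−1}·dr/n; hence bw(Q_n(d,r)) ≤ 2^{n−1}·dr/n. -/
lemma count_mod (N n m : ℕ) (hm : m < n) (hN : N % n = 0) :
    ((Finset.range N).filter (fun t => t % n = m)).card = N / n := by
  have hmul : n * (N / n) = N := Nat.mul_div_cancel' (Nat.dvd_of_mod_eq_zero hN)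
  rw [← Finset.card_range (N / n)]
  apply Finset.card_bij' (fun t _ => t / n) (fun k _ => m + n * k)
  · intro t ht
    simp only [Finset.mem_filter, Finset.mem_range] at ht
    simp only [Finset.mem_range]
    exact Nat.div_lt_of_lt_mul (by omega)
  · intro k hk
    simp only [Finset.mem_range] at hk
    simp only [Finset.mem_filter, Finset.mem_range]
    constructor
    · nlinarith
    · simp [Nat.add_mul_mod_self_left, Nat.mod_eq_of_lt hm]
  · intro t ht
    simp only [Finset.mem_filter, Finset.mem_range] at ht
    have := Nat.div_add_mod t n
    omega
  · intro k hk
    simp only [Finset.mem_range] at hk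
    rw [Nat.add_mul_div_left _ _ (by omega : 0 < n), Nat.div_eq_of_lt hm]
    omega

open Classical in
lemma Scard (n d r : ℕ) [NeZero r] (hn : 2 ≤ n) (hd : 1 ≤ d) (hdn : d ≤ n)
    (hmod : (d * r) % n = 0) :
    (Finset.univ.filter (fun x : ZMod r => ∃ i : ℕ, 1 ≤ i ∧ i ≤ d ∧
      ((i : ZMod n) + (d : ZMod n) * ((x.val : ℕ) : ZMod n) = ((n - 1 : ℕ) : ZMod n)))).card
      = d * r / n := by
  have hr0 : 0 < r := Nat.pos_of_ne_zero (NeZero.ne r)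
  rw [← count_mod (d * r) n (n - 2) (by omega) hmod]
  apply (Finset.card_bij (fun t _ => ((t / d : ℕ) : ZMod r)) ?_ ?_ ?_).symm
  · -- maps into S
    intro t ht
    simp only [Finset.mem_filter, Finset.mem_range] at ht
    obtain ⟨htN, htm⟩ := ht
    have hmd : t % d < d := Nat.mod_lt _ (by omega)
    simp only [Finset.mem_filter, Finset.mem_univ, true_and]
    refine ⟨t % d + 1, by omega, by omega, ?_⟩
    have hx : t / d < r := Nat.div_lt_of_lt_mul (by omega)
    have hval : (((t / d : ℕ) : ZMod r)).val = t / d := ZMod.val_cast_of_lt hx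
    rw [hval]
    have ht1 : t % d + 1 + d * (t / d) = t + 1 := by
      have := Nat.div_add_mod t d; omega
    have key : ((t + 1 : ℕ) : ZMod n) = ((n - 1 : ℕ) : ZMod n) := by
      rw [ZMod.natCast_eq_natCast_iff]
      show (t + 1) % n = (n - 1) % n
      have h1 : (t + 1) % n = (t % n + 1) % n := by
        conv_lhs => rw [← Nat.mod_add_div t n]
        rw [Nat.add_right_comm, Nat.add_mul_mod_self_left]
      rw [h1, htm, Nat.mod_eq_of_lt (by omega : n - 2 + 1 < n),
        Nat.mod_eq_of_lt (by omega : n - 1 < n)]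
      omega
    rw [← ht1] at key
    push_cast at key ⊢
    linear_combination key
  · -- injective
    intro t ht t' ht' heq
    simp only [Finset.mem_filter, Finset.mem_range] at ht ht'
    have hx : t / d < r := Nat.div_lt_of_lt_mul (by omega)
    have hx' : t' / d < r := Nat.div_lt_of_lt_mul (by omega)
    have hdiv : t / d = t' / d := by
      have := (ZMod.natCast_eq_natCast_iff _ _ _).mp heq
      rwa [Nat.ModEq, Nat.mod_eq_of_lt hx, Nat.mod_eq_of_lt hx'] at this
    have ha : t % d < d := Nat.mod_lt _ (by omega)
    have hb : t' % d < d := Nat.mod_lt _ (by omega)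
    have e1 := Nat.div_add_mod t d
    have e2 := Nat.div_add_mod t' d
    have habn : t % d ≡ t' % d [MOD n] := by
      have h3 : t ≡ t' [MOD n] := by rw [Nat.ModEq, ht.2, ht'.2]
      have h5 : d * (t / d) + t % d ≡ d * (t' / d) + t' % d [MOD n] := by
        rwa [e1, e2]
      rw [hdiv] at h5
      exact Nat.ModEq.add_left_cancel' _ h5
    have h4 : t % d = t' % d := by
      have h1 : t % d % n = t % d := Nat.mod_eq_of_lt (by omega)
      have h2 : t' % d % n = t' % d := Nat.mod_eq_of_lt (by omega)
      have h3 : t % d % n = t' % d % n := habn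
      omega
    rw [hdiv] at e1
    omega
  · -- surjective
    intro x hx
    simp only [Finset.mem_filter, Finset.mem_univ, true_and] at hx
    obtain ⟨i, hi1, hi2, hieq⟩ := hx
    have hxv : x.val < r := ZMod.val_lt x
    have hlt : i - 1 + d * x.val < d * r := by
      have h2 : d * x.val + d ≤ d * r := by
        calc d * x.val + d = d * (x.val + 1) := by ring
        _ ≤ d * r := Nat.mul_le_mul_left d (by omega)
      omega
    refine ⟨i - 1 + d * x.val, ?_, ?_⟩
    · simp only [Finset.mem_filter, Finset.mem_range]
      refine ⟨hlt, ?_⟩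
      have hcast2 : ((i : ZMod n) + (d : ZMod n) * ((x.val : ℕ) : ZMod n))
          = ((i + d * x.val : ℕ) : ZMod n) := by push_cast; ring
      rw [hcast2] at hieq
      have h5 : (i + d * x.val) % n = (n - 1) % n :=
        (ZMod.natCast_eq_natCast_iff _ _ _).mp hieq
      rw [Nat.mod_eq_of_lt (by omega : n - 1 < n)] at h5
      have e := Nat.div_add_mod (i + d * x.val) n
      have h8 : i - 1 + d * x.val = n * ((i + d * x.val) / n) + (n - 2) := by omega
      rw [h8, Nat.mul_add_mod, Nat.mod_eq_of_lt (by omega)]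
    · show (((i - 1 + d * x.val) / d : ℕ) : ZMod r) = x
      rw [Nat.add_mul_div_left _ _ (by omega : 0 < d), Nat.div_eq_of_lt (by omega)]
      simp [ZMod.natCast_val, ZMod.cast_id]

/-- for `r ≥ 3` and `dr ≡ 0 (mod n)`, the partition of the
vertices of `Q_n(d,r)` by the value of the `n`-th coordinate `aₙ` is a
bisection whose cut has exactly `2^{n−1}·dr/n` edges; hence
`bw(Q_n(d,r)) ≤ 2^{n−1}·dr/n`.  (The cut edges are counted as ordered pairs
`(p₁, p₂)` with `p₁ ∈ U`, `p₂ ∉ U`, one per edge.) -/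
theorem stmt_15 (n d r : ℕ) [NeZero r] (hn : 2 ≤ n) (hd : 1 ≤ d) (hdn : d ≤ n) (hr : 3 ≤ r)
    (hmod : (d * r) % n = 0)
    (U : Finset ((Fin n → ZMod 2) × ZMod r))
    (hU : U = Finset.univ.filter
      (fun p : (Fin n → ZMod 2) × ZMod r => p.1 ⟨n - 1, by omega⟩ = 1))
    (bwX : ℕ)
    (hbw : IsLeast {c : ℕ | ∃ W : Finset ((Fin n → ZMod 2) × ZMod r),
        (W.card ≤ Wᶜ.card + 1 ∧ Wᶜ.card ≤ W.card + 1) ∧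
        c = Nat.card {p : ((Fin n → ZMod 2) × ZMod r) × ((Fin n → ZMod 2) × ZMod r) //
          (RCR n d r).Adj p.1 p.2 ∧ p.1 ∈ W ∧ p.2 ∉ W}} bwX) :
    U.card = Uᶜ.card ∧
    Nat.card {p : ((Fin n → ZMod 2) × ZMod r) × ((Fin n → ZMod 2) × ZMod r) //
        (RCR n d r).Adj p.1 p.2 ∧ p.1 ∈ U ∧ p.2 ∉ U} = 2 ^ (n - 1) * (d * r / n) ∧
    bwX ≤ 2 ^ (n - 1) * (d * r / n) := by
  classical
  set f : Fin n := ⟨n - 1, by omega⟩ with hf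
  set c : ZMod n := ((n - 1 : ℕ) : ZMod n) with hc
  have hEf : Ebasis n c f = 1 := by simp [Ebasis, hf, hc]
  have h2 : ∀ b : ZMod 2, b + 1 ≠ b := by decide
  have hbb : ∀ b e : ZMod 2, b + e + e = b := by decide
  have hb01 : ∀ b : ZMod 2, b ≠ 1 → b = 0 := by decide
  have hEE : ∀ a : Fin n → ZMod 2, a + Ebasis n c + Ebasis n c = a := by
    intro a; funext k; simp only [Pi.add_apply]; apply hbb
  have hE1 : ∀ j : ZMod n, Ebasis n j f = 1 → j = c := by
    intro j hj
    simp only [Ebasis] at hj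
    split at hj
    · rename_i h; rw [← h]
    · exact absurd hj (by decide)
  have hmemU : ∀ p : (Fin n → ZMod 2) × ZMod r, p ∈ U ↔ p.1 f = 1 := by
    intro p; rw [hU]; simp [hf]
  -- Part 1
  have hcard1 : U.card = Uᶜ.card := by
    apply Finset.card_bij' (fun p _ => (p.1 + Ebasis n c, p.2))
      (fun p _ => (p.1 + Ebasis n c, p.2))
    case hi =>
      intro p hp
      rw [hmemU] at hp
      rw [Finset.mem_compl, hmemU]
      simp only [Pi.add_apply, hp, hEf]
      decide
    case hj =>
      intro p hp
      rw [Finset.mem_compl, hmemU] at hp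
      rw [hmemU]
      simp only [Pi.add_apply, hb01 _ hp, hEf]
      decide
    case left_inv => intro p hp; show (p.1 + _ + _, p.2) = p; rw [hEE]
    case right_inv => intro p hp; show (p.1 + _ + _, p.2) = p; rw [hEE]
  -- the two building-block finsets
  set A : Finset (Fin n → ZMod 2) := Finset.univ.filter (fun a => a f = 1) with hA
  set S : Finset (ZMod r) := Finset.univ.filter (fun x : ZMod r => ∃ i : ℕ, 1 ≤ i ∧ i ≤ d ∧
      ((i : ZMod n) + (d : ZMod n) * ((x.val : ℕ) : ZMod n) = c)) with hS
  have hScard : S.card = d * r / n := by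
    rw [hS, hc]
    convert Scard n d r hn hd hdn hmod using 2
  have hAcard : A.card = 2 ^ (n - 1) := by
    have hsplit : A.card + (Finset.univ.filter (fun a : Fin n → ZMod 2 => ¬ (a f = 1))).card
        = 2 ^ n := by
      rw [hA, Finset.card_filter_add_card_filter_not]
      simp [Fintype.card_fun]
    have heq2 : A.card = (Finset.univ.filter (fun a : Fin n → ZMod 2 => ¬ (a f = 1))).card := by
      apply Finset.card_bij' (fun a _ => a + Ebasis n c) (fun a _ => a + Ebasis n c)
      case hi =>
        intro a ha
        simp only [hA, Finset.mem_filter, Finset.mem_univ, true_and] at ha ⊢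
        simp only [Pi.add_apply, ha, hEf]
        decide
      case hj =>
        intro a ha
        simp only [Finset.mem_filter, Finset.mem_univ, true_and] at ha
        simp only [hA, Finset.mem_filter, Finset.mem_univ, true_and, Pi.add_apply,
          hb01 _ ha, hEf]
        decide
      case left_inv => intro a _; exact hEE a
      case right_inv => intro a _; exact hEE a
    have h9 : n - 1 + 1 = n := by clear * - hn; omega
    have hpow : 2 ^ (n - 1) * 2 = 2 ^ n := by rw [← pow_succ, h9]
    rw [heq2] at hsplit ⊢
    have hx : (Finset.univ.filter (fun a : Fin n → ZMod 2 => ¬ (a f = 1))).card * 2 = 2 ^ n := by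
      rw [mul_two]; exact hsplit
    rw [← hpow] at hx
    exact Nat.eq_of_mul_eq_mul_right (by norm_num) hx
  -- Part 2
  have hcut : Nat.card {p : ((Fin n → ZMod 2) × ZMod r) × ((Fin n → ZMod 2) × ZMod r) //
        (RCR n d r).Adj p.1 p.2 ∧ p.1 ∈ U ∧ p.2 ∉ U} = 2 ^ (n - 1) * (d * r / n) := by
    rw [Nat.card_eq_fintype_card, Fintype.card_subtype]
    rw [← hScard, ← hAcard, mul_comm, ← Finset.card_product]
    refine (Finset.card_bij (fun (q : ZMod r × (Fin n → ZMod 2)) _ =>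
      ((q.2, q.1), (q.2 + Ebasis n c, q.1))) ?_ ?_ ?_).symm
    · rintro ⟨x, a⟩ hq
      rw [Finset.mem_product] at hq
      obtain ⟨hxS, haA⟩ := hq
      simp only [hS, Finset.mem_filter, Finset.mem_univ, true_and] at hxS
      simp only [hA, Finset.mem_filter, Finset.mem_univ, true_and] at haA
      obtain ⟨i, hi1, hi2, hieq⟩ := hxS
      simp only [Finset.mem_filter, Finset.mem_univ, true_and]
      refine ⟨?_, ?_, ?_⟩
      · rw [RCR, SimpleGraph.fromRel_adj]
        constructor
        · intro h
          have := congrArg Prod.fst h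
          have h3 := congrFun this f
          simp only [Pi.add_apply, hEf] at h3
          exact h2 _ h3.symm
        · left
          right
          refine ⟨rfl, i, hi1, hi2, ?_⟩
          show a + Ebasis n c = a + Ebasis n _
          rw [hieq]
      · rw [hmemU]; exact haA
      · rw [hmemU]
        simp only [Pi.add_apply, haA, hEf]
        decide
    · rintro ⟨x, a⟩ _ ⟨x', a'⟩ _ heq
      simp only [Prod.mk.injEq] at heq
      obtain ⟨⟨h1, h2⟩, _⟩ := heq
      simp [h1, h2]
    · intro p hp
      simp only [Finset.mem_filter, Finset.mem_univ, true_and] at hp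
      obtain ⟨hadj, hp1, hp2⟩ := hp
      rw [hmemU] at hp1 hp2
      have h0 : p.2.1 f = 0 := hb01 _ hp2
      rw [RCR, SimpleGraph.fromRel_adj] at hadj
      obtain ⟨hne, hrel⟩ := hadj
      have key : p.2.2 = p.1.2 ∧ p.2.1 = p.1.1 + Ebasis n c ∧
          ∃ i : ℕ, 1 ≤ i ∧ i ≤ d ∧
            ((i : ZMod n) + (d : ZMod n) * ((p.1.2.val : ℕ) : ZMod n) = c) := by
        rcases hrel with (⟨heq, _⟩ | ⟨hxeq, i, hi1, hi2, hq⟩) | (⟨heq, _⟩ | ⟨hxeq, i, hi1, hi2, hq⟩)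
        · rw [heq] at hp1; rw [hp1] at h0; exact absurd h0 (by decide)
        · -- rel p.1 p.2, cube
          have hEj : Ebasis n ((i : ZMod n) + (d : ZMod n) * ((p.1.2.val : ℕ) : ZMod n)) f = 1 := by
            have h3 := congrFun hq f
            rw [Pi.add_apply, h0, hp1] at h3
            revert h3
            generalize Ebasis n ((i : ZMod n) + (d : ZMod n) * ((p.1.2.val : ℕ) : ZMod n)) f = v
            revert v
            decide
          have hjc := hE1 _ hEj
          refine ⟨hxeq.symm, ?_, i, hi1, hi2, hjc⟩
          rw [hq, hjc]
        · rw [heq] at h0; rw [h0] at hp1; exact absurd hp1 (by decide)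
        · -- rel p.2 p.1, cube
          rw [hxeq] at hq ⊢
          have hEj : Ebasis n ((i : ZMod n) + (d : ZMod n) * ((p.1.2.val : ℕ) : ZMod n)) f = 1 := by
            have h3 := congrFun hq f
            rw [Pi.add_apply, h0, hp1] at h3
            revert h3
            generalize Ebasis n ((i : ZMod n) + (d : ZMod n) * ((p.1.2.val : ℕ) : ZMod n)) f = v
            revert v
            decide
          have hjc := hE1 _ hEj
          rw [hjc] at hq
          refine ⟨rfl, ?_, i, hi1, hi2, hjc⟩
          rw [hq, hEE]
      obtain ⟨hxx, hq1, i, hi1, hi2, hieq⟩ := key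
      refine ⟨(p.1.2, p.1.1), ?_, ?_⟩
      · rw [Finset.mem_product]
        constructor
        · simp only [hS, Finset.mem_filter, Finset.mem_univ, true_and]
          exact ⟨i, hi1, hi2, hieq⟩
        · simp only [hA, Finset.mem_filter, Finset.mem_univ, true_and]
          exact hp1
      · show ((p.1.1, p.1.2), (p.1.1 + Ebasis n c, p.1.2)) = p
        ext <;> simp [hq1, hxx]
  refine ⟨hcard1, hcut, ?_⟩
  apply hbw.2
  exact ⟨U, ⟨by omega, by omega⟩, hcut.symm⟩
end

section
/- Let dr = n (so r = n/d) and r ≥ 3. The diameter of Q_n(d,r) equals n + r if r = 3, and n + ⌊3r/2⌋ − 2 if r ≥ 4. -/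
namespace RCRAux

def blk (n d k : ℕ) : ℕ := (k + n - 1) % n / d

lemma zmod2_add_one_ne : ∀ z : ZMod 2, z + 1 ≠ z := by decide
lemma zmod2_eq_add_one : ∀ s t : ZMod 2, s ≠ t → t = s + 1 := by decide

section blkfacts
variable {n d r : ℕ} (hd : 1 ≤ d) (hr : 3 ≤ r) (hdr : d * r = n)
include hd hr hdr

lemma mulsub1 : d * (r - 1) + d = n := by
  rw [← Nat.mul_succ]; rw [← hdr]; congr 1; omega

lemma nsub1div : (n - 1) / d = r - 1 := by
  have h1 := mulsub1 hd hr hdr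
  have : n - 1 = (d - 1) + d * (r - 1) := by omega
  rw [this, Nat.add_mul_div_left _ _ (by omega : 0 < d), Nat.div_eq_of_lt (by omega)]
  omega

lemma npos : 0 < n := by have := mulsub1 hd hr hdr; omega

lemma blk_lt (k : ℕ) : blk n d k < r := by
  have hn0 : 0 < n := npos hd hr hdr
  have h1 : (k + n - 1) % n < n := Nat.mod_lt _ hn0
  have h2 : (k + n - 1) % n / d ≤ (n-1) / d := Nat.div_le_div_right (by omega)
  have h3 := nsub1div hd hr hdr
  unfold blk
  omega

lemma blk_of_pos {k : ℕ} (h1 : 1 ≤ k) (h2 : k < n) : blk n d k = (k - 1) / d := by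
  unfold blk
  congr 1
  have h : k + n - 1 = (k - 1) + n := by omega
  rw [h, Nat.add_mod_right]
  exact Nat.mod_eq_of_lt (by omega)

lemma blk_zero : blk n d 0 = r - 1 := by
  unfold blk
  have hn0 : 0 < n := npos hd hr hdr
  have h0 : (0 + n - 1) % n = 0 + n - 1 := Nat.mod_eq_of_lt (by omega)
  rw [h0]
  have h3 := nsub1div hd hr hdr
  have : 0 + n - 1 = n - 1 := by omega
  rw [this, h3]

lemma exists_coord_blk (j : ℕ) (hj : j < r) : ∃ k : Fin n, blk n d (k : ℕ) = j := by
  have hn0 : 0 < n := npos hd hr hdr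
  have hdj : d * j + 1 ≤ n := by
    have h1 : d * (j+1) ≤ d * r := Nat.mul_le_mul_left d (by omega)
    have h2 : d * (j+1) = d * j + d := by ring
    omega
  rcases eq_or_lt_of_le hdj with he | hlt
  · refine ⟨⟨0, hn0⟩, ?_⟩
    have hd1 : d * (r - j) = 1 := by
      have h2 : d * (r - j) = d * r - d * j := Nat.mul_sub d r j
      omega
    have hjr : j = r - 1 := by
      have := Nat.eq_one_of_mul_eq_one_right hd1
      have := Nat.eq_one_of_mul_eq_one_left hd1
      omega
    have := blk_zero hd hr hdr
    simp only [hjr]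
    simpa using this
  · refine ⟨⟨d * j + 1, hlt⟩, ?_⟩
    rw [show ((⟨d * j + 1, hlt⟩ : Fin n) : ℕ) = d * j + 1 from rfl]
    rw [blk_of_pos hd hr hdr (by omega) hlt]
    simp [Nat.mul_div_cancel_left _ (show 0 < d by omega)]

lemma blk_rep {k : ℕ} (hk : k < n) {x : ℕ} (hbx : blk n d k = x) :
    ∃ i : ℕ, 1 ≤ i ∧ i ≤ d ∧ ((i + d * x : ℕ) : ZMod n) = (k : ZMod n) := by
  rcases Nat.eq_zero_or_pos k with h0 | hpos
  · subst h0
    have hx : x = r - 1 := by rw [blk_zero hd hr hdr] at hbx; omega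
    subst hx
    refine ⟨d, hd, le_refl d, ?_⟩
    have hm := mulsub1 hd hr hdr
    rw [show d + d * (r - 1) = n by omega]
    simp
  · rw [blk_of_pos hd hr hdr hpos hk] at hbx
    have hdm := Nat.div_add_mod (k-1) d
    rw [hbx] at hdm
    have hml : (k-1) % d < d := Nat.mod_lt _ (by omega)
    refine ⟨k - d * x, by omega, by omega, ?_⟩
    have : k - d * x + d * x = k := by omega
    rw [this]
end blkfacts
end RCRAux

namespace RCRAux
section adj
variable {n d r : ℕ}

lemma ebasis_apply (hn : 0 < n) (j : ZMod n) (k : Fin n) :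
    Ebasis n j k = if (k : ℕ) = j.val then 1 else 0 := by
  haveI : NeZero n := ⟨by omega⟩
  unfold Ebasis
  congr 1
  simp only [eq_iff_iff]
  constructor
  · intro h
    have := congrArg ZMod.val h
    rwa [ZMod.val_natCast, Nat.mod_eq_of_lt k.isLt] at this
  · intro h
    rw [h, ZMod.natCast_val, ZMod.cast_id]

lemma add_ebasis (hn : 0 < n) (a : Fin n → ZMod 2) (j : ZMod n) :
    haveI : NeZero n := ⟨by omega⟩
    a + Ebasis n j = Function.update a ⟨j.val, ZMod.val_lt j⟩ (a ⟨j.val, ZMod.val_lt j⟩ + 1) := by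
  haveI : NeZero n := ⟨by omega⟩
  funext k
  rcases eq_or_ne k ⟨j.val, ZMod.val_lt j⟩ with h | h
  · subst h
    simp [Function.update_self, ebasis_apply hn, Pi.add_apply]
  · have hne : (k : ℕ) ≠ j.val := by
      intro hc; exact h (Fin.ext hc)
    simp [Function.update_of_ne h, ebasis_apply hn, hne, Pi.add_apply]

variable (hd : 1 ≤ d) (hr : 3 ≤ r) (hdr : d * r = n)
include hd hr hdr

lemma blk_of_rep {i : ℕ} (h1 : 1 ≤ i) (h2 : i ≤ d) (x : ZMod r) :
    blk n d (((i : ZMod n) + (d : ZMod n) * (x.val : ZMod n)).val) = x.val := by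
  haveI : NeZero n := ⟨by have := npos hd hr hdr; omega⟩
  haveI : NeZero r := ⟨by omega⟩
  set t := i + d * x.val with ht
  have hcast : ((i : ZMod n) + (d : ZMod n) * (x.val : ZMod n)) = ((t : ℕ) : ZMod n) := by
    push_cast [ht]; ring
  have hxr : x.val ≤ r - 1 := by have := ZMod.val_lt x; omega
  have htn : t ≤ n := by
    have h3 : d * x.val ≤ d * (r-1) := Nat.mul_le_mul_left d hxr
    have h4 := mulsub1 hd hr hdr
    omega
  rcases eq_or_lt_of_le htn with he | hlt
  · -- t = n: i = d and x.val = r - 1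
    have h4 := mulsub1 hd hr hdr
    have h5 : d * x.val ≤ d * (r-1) := Nat.mul_le_mul_left d (by omega)
    have hi : i = d := by omega
    have hxv : d * x.val = d * (r-1) := by omega
    have hx1 : x.val = r - 1 := Nat.eq_of_mul_eq_mul_left (by omega) hxv
    rw [hcast, he]
    simp only [ZMod.natCast_self, ZMod.val_zero]
    rw [blk_zero hd hr hdr, hx1]
  · rw [hcast, ZMod.val_natCast, Nat.mod_eq_of_lt hlt]
    rw [blk_of_pos hd hr hdr (by omega) hlt]
    have : t - 1 = (i - 1) + d * x.val := by omega
    rw [this, Nat.add_mul_div_left _ _ (show 0 < d by omega), Nat.div_eq_of_lt (by omega)]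
    omega

lemma adj_ring (a : Fin n → ZMod 2) (x : ZMod r) :
    (RCR n d r).Adj (a, x) (a, x + 1) := by
  haveI : Fact (1 < r) := ⟨by omega⟩
  rw [RCR, SimpleGraph.fromRel_adj]
  constructor
  · intro hc
    have : x + 1 = x := (Prod.ext_iff.mp hc).2.symm
    have h1 : (1 : ZMod r) = 0 := by
      have := congrArg (fun z => z - x) this
      simpa using this
    exact one_ne_zero h1
  · left; exact Or.inl ⟨rfl, rfl⟩

lemma adj_ring' (a : Fin n → ZMod 2) (x : ZMod r) :
    (RCR n d r).Adj (a, x) (a, x - 1) := by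
  have := (adj_ring hd hr hdr a (x - 1)).symm
  simpa using this

lemma adj_cube (a : Fin n → ZMod 2) (x : ZMod r) {i : ℕ} (h1 : 1 ≤ i) (h2 : i ≤ d) :
    (RCR n d r).Adj (a, x) (a + Ebasis n ((i : ZMod n) + (d : ZMod n) * (x.val : ZMod n)), x) := by
  haveI : NeZero n := ⟨by have := npos hd hr hdr; omega⟩
  rw [RCR, SimpleGraph.fromRel_adj]
  set j : ZMod n := (i : ZMod n) + (d : ZMod n) * (x.val : ZMod n) with hj
  constructor
  · intro hc
    have h := (Prod.ext_iff.mp hc).1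
    have h2 := congrFun h ⟨j.val, ZMod.val_lt j⟩
    rw [add_ebasis (by have := npos hd hr hdr; omega)] at h2
    simp only [Function.update_self] at h2
    exact zmod2_add_one_ne _ h2.symm
  · left; exact Or.inr ⟨rfl, i, h1, h2, rfl⟩

/-- classification of edges of RCR -/
lemma adj_cases {p q : (Fin n → ZMod 2) × ZMod r} (h : (RCR n d r).Adj p q) :
    (p.1 = q.1 ∧ (q.2 = p.2 + 1 ∨ p.2 = q.2 + 1)) ∨
    (p.2 = q.2 ∧ ∃ k : Fin n, blk n d (k : ℕ) = p.2.val ∧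
      q.1 = Function.update p.1 k (p.1 k + 1)) := by
  haveI : NeZero n := ⟨by have := npos hd hr hdr; omega⟩
  rw [RCR, SimpleGraph.fromRel_adj] at h
  obtain ⟨-, h | h⟩ := h
  · rcases h with ⟨h1, h2⟩ | ⟨h1, i, hi1, hi2, h3⟩
    · exact Or.inl ⟨h1, Or.inl h2⟩
    · right
      set j : ZMod n := (i : ZMod n) + (d : ZMod n) * ((p.2.val : ℕ) : ZMod n) with hj
      refine ⟨h1, ⟨⟨j.val, ZMod.val_lt j⟩, ?_, ?_⟩⟩
      · exact blk_of_rep hd hr hdr hi1 hi2 p.2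
      · rw [h3, add_ebasis (npos hd hr hdr)]
  · rcases h with ⟨h1, h2⟩ | ⟨h1, i, hi1, hi2, h3⟩
    · exact Or.inl ⟨h1.symm, Or.inr h2⟩
    · right
      set j : ZMod n := (i : ZMod n) + (d : ZMod n) * ((q.2.val : ℕ) : ZMod n) with hj
      refine ⟨h1.symm, ⟨⟨j.val, ZMod.val_lt j⟩, ?_, ?_⟩⟩
      · rw [show p.2 = q.2 from h1.symm]; exact blk_of_rep hd hr hdr hi1 hi2 q.2
      · 
        have hq : q.1 = p.1 + Ebasis n ((i : ZMod n) + (d : ZMod n) * ((q.2.val : ℕ) : ZMod n)) := by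
          rw [h3]
          funext k'
          simp only [Pi.add_apply]
          rw [add_assoc, CharTwo.add_self_eq_zero, add_zero]
        rw [hq, add_ebasis (npos hd hr hdr)]
end adj
end RCRAux

namespace RCRAux
section walks
variable {n d r : ℕ}

/-- number of coordinates where `a` and `b` differ -/
def diffc (a b : Fin n → ZMod 2) : ℕ :=
  (Finset.univ.filter (fun k => a k ≠ b k)).card

lemma diffc_le_n (a b : Fin n → ZMod 2) : diffc a b ≤ n := by
  unfold diffc
  calc (Finset.univ.filter (fun k => a k ≠ b k)).card ≤ Finset.univ.card :=
        Finset.card_filter_le _ _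
  _ = n := by simp

variable (hd : 1 ≤ d) (hr : 3 ≤ r) (hdr : d * r = n)
include hd hr hdr

lemma walk_flip (x : ZMod r) : ∀ (c : ℕ) (a b : Fin n → ZMod 2), diffc a b ≤ c →
    (∀ k : Fin n, a k ≠ b k → blk n d (k : ℕ) = x.val) →
    ∃ w : (RCR n d r).Walk (a, x) (b, x), w.length ≤ diffc a b := by
  haveI : NeZero n := ⟨by have := npos hd hr hdr; omega⟩
  intro c
  induction c with
  | zero =>
    intro a b hc hcov
    have hab : a = b := by
      funext k
      by_contra hk
      have : k ∈ Finset.univ.filter (fun k => a k ≠ b k) := by simp [hk]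
      have := Finset.card_pos.mpr ⟨k, this⟩
      unfold diffc at hc; omega
    subst hab
    exact ⟨SimpleGraph.Walk.nil, by simp⟩
  | succ c ih =>
    intro a b hc hcov
    by_cases hab : a = b
    · subst hab; exact ⟨SimpleGraph.Walk.nil, by simp⟩
    · have : ∃ k, a k ≠ b k := by
        by_contra hcon
        push_neg at hcon
        exact hab (funext hcon)
      obtain ⟨k, hk⟩ := this
      obtain ⟨i, hi1, hi2, hik⟩ := blk_rep hd hr hdr k.isLt (hcov k hk)
      set j : ZMod n := (i : ZMod n) + (d : ZMod n) * ((x.val : ℕ) : ZMod n) with hj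
      have hjk : j = ((k : ℕ) : ZMod n) := by
        rw [hj, ← hik]; push_cast; ring
      have hjval : j.val = (k : ℕ) := by
        rw [hjk, ZMod.val_natCast, Nat.mod_eq_of_lt k.isLt]
      have hfink : (⟨j.val, ZMod.val_lt j⟩ : Fin n) = k := Fin.ext hjval
      have ha' : a + Ebasis n j = Function.update a k (a k + 1) := by
        rw [add_ebasis (npos hd hr hdr), hfink]
      set a' : Fin n → ZMod 2 := Function.update a k (a k + 1) with ha'def
      have hadj : (RCR n d r).Adj (a, x) (a', x) := by
        have := adj_cube hd hr hdr a x hi1 hi2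
        rwa [show (i : ZMod n) + (d : ZMod n) * ((x.val : ℕ) : ZMod n) = j from rfl, ha'] at this
      -- the diff set shrinks
      have hset : Finset.univ.filter (fun k' => a' k' ≠ b k') =
          (Finset.univ.filter (fun k' => a k' ≠ b k')).erase k := by
        ext k'
        rcases eq_or_ne k' k with he | hne
        · subst he
          simp [ha'def, Function.update_self, zmod2_eq_add_one _ _ hk]
        · simp [ha'def, Function.update_of_ne hne, hne]
      have hkmem : k ∈ Finset.univ.filter (fun k' => a k' ≠ b k') := by simp [hk]
      have hcard : diffc a' b = diffc a b - 1 := by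
        unfold diffc
        rw [hset, Finset.card_erase_of_mem hkmem]
      have hpos : 1 ≤ diffc a b := by
        unfold diffc; exact Finset.card_pos.mpr ⟨k, hkmem⟩
      have hcov' : ∀ k' : Fin n, a' k' ≠ b k' → blk n d (k' : ℕ) = x.val := by
        intro k' hk'
        rcases eq_or_ne k' k with he | hne
        · subst he
          simp [ha'def, Function.update_self, zmod2_eq_add_one _ _ hk] at hk'
        · exact hcov k' (by rwa [ha'def, Function.update_of_ne hne] at hk')
      obtain ⟨w', hw'⟩ := ih a' b (by omega) hcov'
      exact ⟨SimpleGraph.Walk.cons hadj w', by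
        rw [SimpleGraph.Walk.length_cons]; omega⟩

lemma walk_ringF (a : Fin n → ZMod 2) (x : ZMod r) (t : ℕ) :
    ∃ w : (RCR n d r).Walk (a, x) (a, x + (t : ZMod r)), w.length = t := by
  induction t with
  | zero => exact ⟨SimpleGraph.Walk.nil.copy rfl (by simp), by simp⟩
  | succ t ih =>
    obtain ⟨w, hw⟩ := ih
    refine ⟨(w.concat (adj_ring hd hr hdr a (x + (t : ZMod r)))).copy rfl (by push_cast; ring_nf), ?_⟩
    rw [SimpleGraph.Walk.length_copy, SimpleGraph.Walk.length_concat, hw]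

lemma walk_ringB (a : Fin n → ZMod 2) (x : ZMod r) (t : ℕ) :
    ∃ w : (RCR n d r).Walk (a, x) (a, x - (t : ZMod r)), w.length = t := by
  induction t with
  | zero => exact ⟨SimpleGraph.Walk.nil.copy rfl (by simp), by simp⟩
  | succ t ih =>
    obtain ⟨w, hw⟩ := ih
    refine ⟨(w.concat (adj_ring' hd hr hdr a (x - (t : ZMod r)))).copy rfl (by push_cast; ring_nf), ?_⟩
    rw [SimpleGraph.Walk.length_copy, SimpleGraph.Walk.length_concat, hw]

lemma walk_sweepF : ∀ (t : ℕ) (a b : Fin n → ZMod 2) (x : ZMod r),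
    (∀ k : Fin n, a k ≠ b k →
      ∃ s : ℕ, s ≤ t ∧ x + (s : ZMod r) = ((blk n d (k : ℕ) : ℕ) : ZMod r)) →
    ∃ w : (RCR n d r).Walk (a, x) (b, x + (t : ZMod r)), w.length ≤ diffc a b + t := by
  haveI : NeZero r := ⟨by omega⟩
  intro t
  induction t with
  | zero =>
    intro a b x hcov
    have hcov' : ∀ k : Fin n, a k ≠ b k → blk n d (k : ℕ) = x.val := by
      intro k hk
      obtain ⟨s, hs0, hs⟩ := hcov k hk
      interval_cases s
      simp only [Nat.cast_zero, add_zero] at hs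
      rw [hs, ZMod.val_natCast, Nat.mod_eq_of_lt (blk_lt hd hr hdr _)]
    obtain ⟨w, hw⟩ := walk_flip hd hr hdr x (diffc a b) a b le_rfl hcov'
    exact ⟨w.copy rfl (by simp), by simpa using by omega⟩
  | succ t ih =>
    intro a b x hcov
    set b₁ : Fin n → ZMod 2 := fun k => if blk n d (k : ℕ) = x.val then b k else a k with hb₁
    have hcov1 : ∀ k : Fin n, a k ≠ b₁ k → blk n d (k : ℕ) = x.val := by
      intro k hk
      by_contra hc
      simp [hb₁, hc] at hk
    obtain ⟨w₁, hw₁⟩ := walk_flip hd hr hdr x (diffc a b₁) a b₁ le_rfl hcov1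
    have hadj : (RCR n d r).Adj (b₁, x) (b₁, x + 1) := adj_ring hd hr hdr b₁ x
    have hcov2 : ∀ k : Fin n, b₁ k ≠ b k →
        ∃ s : ℕ, s ≤ t ∧ (x + 1) + (s : ZMod r) = ((blk n d (k : ℕ) : ℕ) : ZMod r) := by
      intro k hk
      have hblk : ¬ (blk n d (k : ℕ) = x.val) := by
        intro hc; simp [hb₁, hc] at hk
      have hak : a k ≠ b k := by
        intro hc; apply hk; simp [hb₁, hblk, hc]
      obtain ⟨s, hs0, hs⟩ := hcov k hak
      rcases Nat.eq_zero_or_pos s with h0 | hpos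
      · exfalso
        subst h0
        simp only [Nat.cast_zero, add_zero] at hs
        apply hblk
        rw [hs, ZMod.val_natCast, Nat.mod_eq_of_lt (blk_lt hd hr hdr _)]
      · refine ⟨s - 1, by omega, ?_⟩
        rw [← hs]
        have hcast : ((s : ℕ) : ZMod r) = ((s - 1 : ℕ) : ZMod r) + 1 := by
          have h1 : s - 1 + 1 = s := by omega
          conv_lhs => rw [← h1]
          push_cast
          ring
        rw [hcast]; ring
    obtain ⟨w₂, hw₂⟩ := ih b₁ b (x + 1) hcov2
    have hdsum : diffc a b₁ + diffc b₁ b ≤ diffc a b := by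
      unfold diffc
      have e1 : Finset.univ.filter (fun k : Fin n => a k ≠ b₁ k) =
          (Finset.univ.filter (fun k : Fin n => a k ≠ b k)).filter
            (fun k : Fin n => blk n d (k : ℕ) = x.val) := by
        ext k
        by_cases hblk : blk n d (k : ℕ) = x.val <;> simp [hb₁, hblk]
      have e2 : Finset.univ.filter (fun k : Fin n => b₁ k ≠ b k) =
          (Finset.univ.filter (fun k : Fin n => a k ≠ b k)).filter
            (fun k : Fin n => ¬ (blk n d (k : ℕ) = x.val)) := by
        ext k
        by_cases hblk : blk n d (k : ℕ) = x.val <;> simp [hb₁, hblk]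
      rw [e1, e2, Finset.card_filter_add_card_filter_not]
    refine ⟨(w₁.append (SimpleGraph.Walk.cons hadj w₂)).copy rfl (by push_cast; ring), ?_⟩
    rw [SimpleGraph.Walk.length_copy, SimpleGraph.Walk.length_append,
      SimpleGraph.Walk.length_cons]
    omega

lemma walk_sweepB : ∀ (t : ℕ) (a b : Fin n → ZMod 2) (x : ZMod r),
    (∀ k : Fin n, a k ≠ b k →
      ∃ s : ℕ, s ≤ t ∧ x - (s : ZMod r) = ((blk n d (k : ℕ) : ℕ) : ZMod r)) →
    ∃ w : (RCR n d r).Walk (a, x) (b, x - (t : ZMod r)), w.length ≤ diffc a b + t := by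
  haveI : NeZero r := ⟨by omega⟩
  intro t
  induction t with
  | zero =>
    intro a b x hcov
    have hcov' : ∀ k : Fin n, a k ≠ b k → blk n d (k : ℕ) = x.val := by
      intro k hk
      obtain ⟨s, hs0, hs⟩ := hcov k hk
      interval_cases s
      simp only [Nat.cast_zero, sub_zero] at hs
      rw [hs, ZMod.val_natCast, Nat.mod_eq_of_lt (blk_lt hd hr hdr _)]
    obtain ⟨w, hw⟩ := walk_flip hd hr hdr x (diffc a b) a b le_rfl hcov'
    exact ⟨w.copy rfl (by simp), by simpa using by omega⟩
  | succ t ih =>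
    intro a b x hcov
    set b₁ : Fin n → ZMod 2 := fun k => if blk n d (k : ℕ) = x.val then b k else a k with hb₁
    have hcov1 : ∀ k : Fin n, a k ≠ b₁ k → blk n d (k : ℕ) = x.val := by
      intro k hk
      by_contra hc
      simp [hb₁, hc] at hk
    obtain ⟨w₁, hw₁⟩ := walk_flip hd hr hdr x (diffc a b₁) a b₁ le_rfl hcov1
    have hadj : (RCR n d r).Adj (b₁, x) (b₁, x - 1) := adj_ring' hd hr hdr b₁ x
    have hcov2 : ∀ k : Fin n, b₁ k ≠ b k →
        ∃ s : ℕ, s ≤ t ∧ (x - 1) - (s : ZMod r) = ((blk n d (k : ℕ) : ℕ) : ZMod r) := by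
      intro k hk
      have hblk : ¬ (blk n d (k : ℕ) = x.val) := by
        intro hc; simp [hb₁, hc] at hk
      have hak : a k ≠ b k := by
        intro hc; apply hk; simp [hb₁, hblk, hc]
      obtain ⟨s, hs0, hs⟩ := hcov k hak
      rcases Nat.eq_zero_or_pos s with h0 | hpos
      · exfalso
        subst h0
        simp only [Nat.cast_zero, sub_zero] at hs
        apply hblk
        rw [hs, ZMod.val_natCast, Nat.mod_eq_of_lt (blk_lt hd hr hdr _)]
      · refine ⟨s - 1, by omega, ?_⟩
        rw [← hs]
        have hcast : ((s : ℕ) : ZMod r) = ((s - 1 : ℕ) : ZMod r) + 1 := by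
          have h1 : s - 1 + 1 = s := by omega
          conv_lhs => rw [← h1]
          push_cast
          ring
        rw [hcast]; ring
    obtain ⟨w₂, hw₂⟩ := ih b₁ b (x - 1) hcov2
    have hdsum : diffc a b₁ + diffc b₁ b ≤ diffc a b := by
      unfold diffc
      have e1 : Finset.univ.filter (fun k : Fin n => a k ≠ b₁ k) =
          (Finset.univ.filter (fun k : Fin n => a k ≠ b k)).filter
            (fun k : Fin n => blk n d (k : ℕ) = x.val) := by
        ext k
        by_cases hblk : blk n d (k : ℕ) = x.val <;> simp [hb₁, hblk]
      have e2 : Finset.univ.filter (fun k : Fin n => b₁ k ≠ b k) =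
          (Finset.univ.filter (fun k : Fin n => a k ≠ b k)).filter
            (fun k : Fin n => ¬ (blk n d (k : ℕ) = x.val)) := by
        ext k
        by_cases hblk : blk n d (k : ℕ) = x.val <;> simp [hb₁, hblk]
      rw [e1, e2, Finset.card_filter_add_card_filter_not]
    refine ⟨(w₁.append (SimpleGraph.Walk.cons hadj w₂)).copy rfl (by push_cast; ring), ?_⟩
    rw [SimpleGraph.Walk.length_copy, SimpleGraph.Walk.length_append,
      SimpleGraph.Walk.length_cons]
    omega

end walks
end RCRAux

namespace RCRAux
section upper
variable {n d r : ℕ} (hd : 1 ≤ d) (hr : 3 ≤ r) (hdr : d * r = n)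
include hd hr hdr

/-- full coverage forward within r-1 steps -/
lemma covF (z : ZMod r) (t : ℕ) (ht : r - 1 ≤ t) (m : ℕ) (hm : m < r) :
    ∃ s : ℕ, s ≤ t ∧ z + (s : ZMod r) = ((m : ℕ) : ZMod r) := by
  haveI : NeZero r := ⟨by omega⟩
  refine ⟨(m + r - z.val) % r, by have := Nat.mod_lt (m + r - z.val) (show 0 < r by omega); omega, ?_⟩
  rw [ZMod.natCast_mod]
  have hzv : z.val ≤ m + r := by have := ZMod.val_lt z; omega
  rw [Nat.cast_sub hzv]
  push_cast
  rw [ZMod.natCast_self, ZMod.natCast_val, ZMod.cast_id]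
  ring

lemma covB (z : ZMod r) (t : ℕ) (ht : r - 1 ≤ t) (m : ℕ) (hm : m < r) :
    ∃ s : ℕ, s ≤ t ∧ z - (s : ZMod r) = ((m : ℕ) : ZMod r) := by
  haveI : NeZero r := ⟨by omega⟩
  refine ⟨(z.val + r - m) % r, by have := Nat.mod_lt (z.val + r - m) (show 0 < r by omega); omega, ?_⟩
  rw [ZMod.natCast_mod]
  have hzv : m ≤ z.val + r := by omega
  rw [Nat.cast_sub hzv]
  push_cast
  rw [ZMod.natCast_self, ZMod.natCast_val, ZMod.cast_id]
  ring

lemma dist_upper (u v : (Fin n → ZMod 2) × ZMod r) :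
    (RCR n d r).dist u v ≤ (if r = 3 then n + r else n + 3 * r / 2 - 2) := by
  haveI : NeZero r := ⟨by omega⟩
  obtain ⟨a, x⟩ := u
  obtain ⟨b, y⟩ := v
  set Δ : ℕ := (y - x).val with hΔdef
  have hΔr : Δ < r := ZMod.val_lt _
  have hΔcast : (Δ : ZMod r) = y - x := by
    rw [hΔdef, ZMod.natCast_val, ZMod.cast_id]
  have hdiff : diffc a b ≤ n := diffc_le_n a b
  rcases Nat.eq_zero_or_pos Δ with h0 | hΔpos
  · -- y = x : full loop forward, length ≤ diffc + r
    have hyx : y = x := by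
      have : y - x = 0 := by rw [← hΔcast, h0]; simp
      have := congrArg (fun z => z + x) this
      simpa using this
    obtain ⟨w, hw⟩ := walk_sweepF hd hr hdr r a b x (by
      intro k hk
      exact covF hd hr hdr x r (by omega) _ (blk_lt hd hr hdr _))
    have hend : x + ((r : ℕ) : ZMod r) = y := by
      rw [ZMod.natCast_self, add_zero, hyx]
    have hle := SimpleGraph.dist_le (w.copy rfl (by rw [hend]))
    rw [SimpleGraph.Walk.length_copy] at hle
    have : (RCR n d r).dist (a, x) (b, y) ≤ n + r := le_trans hle (by omega)
    split_ifs with h3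
    · omega
    · have h4 : 4 ≤ r := by omega
      have : r ≤ 3 * r / 2 - 2 := by omega
      omega
  · rcases le_or_gt Δ (r / 2) with hsmall | hbig
    · -- forward Δ-1 then sweep backward r-1
      obtain ⟨w₁, hw₁⟩ := walk_ringF hd hr hdr a x (Δ - 1)
      obtain ⟨w₂, hw₂⟩ := walk_sweepB hd hr hdr (r - 1) a b (x + ((Δ - 1 : ℕ) : ZMod r)) (by
        intro k hk
        exact covB hd hr hdr _ (r-1) le_rfl _ (blk_lt hd hr hdr _))
      have hend : x + ((Δ - 1 : ℕ) : ZMod r) - ((r - 1 : ℕ) : ZMod r) = y := by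
        rw [Nat.cast_sub (by omega : 1 ≤ Δ), Nat.cast_sub (by omega : 1 ≤ r)]
        rw [ZMod.natCast_self]
        rw [hΔcast]
        push_cast
        ring
      have hle := SimpleGraph.dist_le ((w₁.append w₂).copy rfl (by rw [hend]))
      rw [SimpleGraph.Walk.length_copy, SimpleGraph.Walk.length_append] at hle
      have htot : (RCR n d r).dist (a, x) (b, y) ≤ (Δ - 1) + (n + (r - 1)) := by
        omega
      split_ifs with h3
      · -- r = 3: Δ ≤ 1 so Δ = 1
        have : Δ = 1 := by omega
        omega
      · have h4 : 4 ≤ r := by omega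
        have : (Δ - 1) + (n + (r - 1)) ≤ n + 3 * r / 2 - 2 := by omega
        omega
    · -- backward r-1-Δ then sweep forward r-1
      obtain ⟨w₁, hw₁⟩ := walk_ringB hd hr hdr a x (r - 1 - Δ)
      obtain ⟨w₂, hw₂⟩ := walk_sweepF hd hr hdr (r - 1) a b (x - ((r - 1 - Δ : ℕ) : ZMod r)) (by
        intro k hk
        exact covF hd hr hdr _ (r-1) le_rfl _ (blk_lt hd hr hdr _))
      have hend : x - ((r - 1 - Δ : ℕ) : ZMod r) + ((r - 1 : ℕ) : ZMod r) = y := by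
        have h2 : ((r - 1 : ℕ) : ZMod r) = ((r - 1 - Δ : ℕ) : ZMod r) + (Δ : ZMod r) := by
          rw [← Nat.cast_add]
          congr 1
          omega
        rw [h2, hΔcast]
        ring
      have hle := SimpleGraph.dist_le ((w₁.append w₂).copy rfl (by rw [hend]))
      rw [SimpleGraph.Walk.length_copy, SimpleGraph.Walk.length_append] at hle
      have htot : (RCR n d r).dist (a, x) (b, y) ≤ (r - 1 - Δ) + (n + (r - 1)) := by
        omega
      split_ifs with h3
      · -- r = 3: Δ = 2
        have : Δ = 2 := by omega
        omega
      · have h4 : 4 ≤ r := by omega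
        have : (r - 1 - Δ) + (n + (r - 1)) ≤ n + 3 * r / 2 - 2 := by omega
        omega

end upper
end RCRAux

namespace RCRAux

/-! ### List-level lemmas for ±1/0 walks on ℤ -/

def maxP : List ℤ → ℤ
  | [] => 0
  | s :: l => max 0 (s + maxP l)

def minP : List ℤ → ℤ
  | [] => 0
  | s :: l => min 0 (s + minP l)

def nzc : List ℤ → ℕ
  | [] => 0
  | s :: l => (if s = 0 then 0 else 1) + nzc l

def goodL (l : List ℤ) : Prop := ∀ z ∈ l, z = 1 ∨ z = 0 ∨ z = -1

lemma maxP_nonneg (l : List ℤ) : 0 ≤ maxP l := by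
  cases l with
  | nil => simp [maxP]
  | cons s l => simp [maxP]

lemma minP_nonpos (l : List ℤ) : minP l ≤ 0 := by
  cases l with
  | nil => simp [minP]
  | cons s l => simp [minP]

lemma sum_le_maxP (l : List ℤ) : l.sum ≤ maxP l := by
  induction l with
  | nil => simp [maxP]
  | cons s l ih => simp only [maxP, List.sum_cons]; omega

lemma minP_le_sum (l : List ℤ) : minP l ≤ l.sum := by
  induction l with
  | nil => simp [minP]
  | cons s l ih => simp only [minP, List.sum_cons]; omega

lemma nzc_ge_natAbs (l : List ℤ) (hg : goodL l) : l.sum.natAbs ≤ nzc l := by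
  induction l with
  | nil => simp
  | cons s l ih =>
    have hs := hg s List.mem_cons_self
    have hl : goodL l := fun z hz => hg z (List.mem_cons_of_mem _ hz)
    have := ih hl
    simp only [nzc, List.sum_cons]
    rcases hs with h | h | h <;> subst h <;> simp <;> omega

lemma key_ineq (l : List ℤ) (hg : goodL l) :
    2 * (maxP l - minP l) ≤ (nzc l : ℤ) + l.sum.natAbs := by
  induction l with
  | nil => simp [maxP, minP, nzc]
  | cons s l ih =>
    have hs := hg s List.mem_cons_self
    have hl : goodL l := fun z hz => hg z (List.mem_cons_of_mem _ hz)
    have hih := ih hl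
    have h1 := maxP_nonneg l
    have h2 := minP_nonpos l
    have h3 := sum_le_maxP l
    have h4 := minP_le_sum l
    simp only [maxP, minP, nzc, List.sum_cons]
    rcases hs with h | h | h <;> subst h
    · rw [if_neg (by norm_num : (1:ℤ) ≠ 0)]; omega
    · rw [if_pos rfl]; omega
    · rw [if_neg (by norm_num : (-1:ℤ) ≠ 0)]; omega

/-! ### Walk measures -/

section walkmeasures
variable {n d r : ℕ}

/-- the ℤ-valued ring step of an edge -/
def stepOf (p q : (Fin n → ZMod 2) × ZMod r) : ℤ :=
  if q.2 = p.2 + 1 then 1 else if p.2 = q.2 + 1 then -1 else 0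

def stepsW : {u v : (Fin n → ZMod 2) × ZMod r} → (RCR n d r).Walk u v → List ℤ
  | _, _, .nil => []
  | u, _, .cons (v := m) _ p => stepOf u m :: stepsW p

lemma stepsW_cons {u m v : (Fin n → ZMod 2) × ZMod r} (h : (RCR n d r).Adj u m)
    (p : (RCR n d r).Walk m v) :
    stepsW (SimpleGraph.Walk.cons h p) = stepOf u m :: stepsW p := rfl

/-- flips of coordinate k along the walk -/
def flipsW (k : Fin n) : {u v : (Fin n → ZMod 2) × ZMod r} → (RCR n d r).Walk u v → ℕ
  | _, _, .nil => 0
  | u, _, .cons (v := m) _ p => (if u.1 k ≠ m.1 k then 1 else 0) + flipsW k p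

lemma flipsW_cons (k : Fin n) {u m v : (Fin n → ZMod 2) × ZMod r} (h : (RCR n d r).Adj u m)
    (p : (RCR n d r).Walk m v) :
    flipsW k (SimpleGraph.Walk.cons h p) = (if u.1 k ≠ m.1 k then 1 else 0) + flipsW k p := rfl

variable (hd : 1 ≤ d) (hr : 3 ≤ r) (hdr : d * r = n)
include hd hr hdr

lemma two_ne_zero' : (2 : ZMod r) ≠ 0 := by
  intro hc
  have h1 : ((2 : ℕ) : ZMod r) = 0 := by exact_mod_cast hc
  rw [ZMod.natCast_eq_zero_iff] at h1
  have := Nat.le_of_dvd (by norm_num) h1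
  omega

lemma one_ne_zero' : (1 : ZMod r) ≠ 0 := by
  intro hc
  have h1 : ((1 : ℕ) : ZMod r) = 0 := by exact_mod_cast hc
  rw [ZMod.natCast_eq_zero_iff] at h1
  have := Nat.le_of_dvd (by norm_num) h1
  omega

/-- the basic classification of an edge in terms of step and flips -/
lemma adj_step {p q : (Fin n → ZMod 2) × ZMod r} (h : (RCR n d r).Adj p q) :
    (p.1 = q.1 ∧ stepOf p q ≠ 0) ∨
    (stepOf p q = 0 ∧ p.2 = q.2 ∧ ∃ k : Fin n, blk n d (k : ℕ) = p.2.val ∧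
      q.1 = Function.update p.1 k (p.1 k + 1)) := by
  rcases adj_cases hd hr hdr h with ⟨h1, h2 | h2⟩ | ⟨h1, k, hk1, hk2⟩
  · left
    refine ⟨h1, ?_⟩
    unfold stepOf
    rw [if_pos h2]
    omega
  · left
    refine ⟨h1, ?_⟩
    unfold stepOf
    by_cases hc : q.2 = p.2 + 1
    · rw [if_pos hc]; omega
    · rw [if_neg hc, if_pos h2]; omega
  · right
    have hst : stepOf p q = 0 := by
      unfold stepOf
      have hc1 : ¬ (q.2 = p.2 + 1) := by
        rw [← h1]
        intro hc
        have : (1 : ZMod r) = 0 := by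
          have := congrArg (fun z => z - p.2) hc
          simpa using this.symm
        exact one_ne_zero' hd hr hdr this
      have hc2 : ¬ (p.2 = q.2 + 1) := by
        rw [← h1]
        intro hc
        have : (1 : ZMod r) = 0 := by
          have := congrArg (fun z => z - p.2) hc
          simpa using this.symm
        exact one_ne_zero' hd hr hdr this
      rw [if_neg hc1, if_neg hc2]
    exact ⟨hst, h1, k, hk1, hk2⟩

omit hd hr hdr in
lemma step_good {p q : (Fin n → ZMod 2) × ZMod r} :
    stepOf p q = 1 ∨ stepOf p q = 0 ∨ stepOf p q = -1 := by
  unfold stepOf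
  split_ifs <;> simp

/-- the position after an edge -/
lemma adj_pos {p q : (Fin n → ZMod 2) × ZMod r} (h : (RCR n d r).Adj p q) :
    q.2 = p.2 + (stepOf p q : ZMod r) := by
  unfold stepOf
  by_cases h1 : q.2 = p.2 + 1
  · rw [if_pos h1]; rw [h1]; push_cast; ring
  · rw [if_neg h1]
    by_cases h2 : p.2 = q.2 + 1
    · rw [if_pos h2]; rw [h2]; push_cast; ring
    · rw [if_neg h2]
      push_cast
      rw [add_zero]
      rcases adj_cases hd hr hdr h with ⟨-, hc | hc⟩ | ⟨h3, -⟩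
      · exact absurd hc h1
      · exact absurd hc h2
      · exact h3.symm

lemma stepsW_good {u v : (Fin n → ZMod 2) × ZMod r} (w : (RCR n d r).Walk u v) :
    goodL (stepsW w) := by
  induction w with
  | nil => intro z hz; simp [stepsW] at hz
  | cons h p ih =>
    intro z hz
    rw [stepsW_cons] at hz
    rcases List.mem_cons.mp hz with h1 | h1
    · subst h1; exact step_good
    · exact ih z h1

/-- total length decomposes -/
lemma length_decomp {u v : (Fin n → ZMod 2) × ZMod r} (w : (RCR n d r).Walk u v) :
    w.length = nzc (stepsW w) + ∑ k : Fin n, flipsW k w := by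
  induction w with
  | nil =>
    simp [stepsW, flipsW, nzc]
  | cons h p ih =>
    rename_i u' m' v'
    rw [SimpleGraph.Walk.length_cons, stepsW_cons]
    simp only [nzc]
    have hsum : ∑ k : Fin n, flipsW k (SimpleGraph.Walk.cons h p) =
        (∑ k : Fin n, (if u'.1 k ≠ m'.1 k then 1 else 0)) + ∑ k : Fin n, flipsW k p := by
      rw [← Finset.sum_add_distrib]
      apply Finset.sum_congr rfl
      intro k _
      rw [flipsW_cons]
    rw [hsum]
    rcases adj_step hd hr hdr h with ⟨h1, h2⟩ | ⟨h1, -, k, -, hk2⟩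
    · have hz : (∑ k : Fin n, (if u'.1 k ≠ m'.1 k then (1:ℕ) else 0)) = 0 := by
        apply Finset.sum_eq_zero
        intro k _
        rw [h1]
        simp
      rw [hz, if_neg h2]
      omega
    · have ho : (∑ k' : Fin n, (if u'.1 k' ≠ m'.1 k' then (1:ℕ) else 0)) = 1 := by
        have : ∀ k' : Fin n, (if u'.1 k' ≠ m'.1 k' then (1:ℕ) else 0) =
            (if k' = k then 1 else 0) := by
          intro k'
          rcases eq_or_ne k' k with he | hne
          · rw [he, hk2]
            have hne2 : u'.1 k ≠ u'.1 k + 1 := fun hc => zmod2_add_one_ne _ hc.symm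
            simp [Function.update_self, hne2]
          · rw [hk2]
            simp [Function.update_of_ne hne, hne]
        rw [Finset.sum_congr rfl (fun k' _ => this k')]
        simp
      rw [ho, if_pos h1]
      omega

/-- coordinate that differs at the ends must be flipped at least once -/
lemma flips_lb {u v : (Fin n → ZMod 2) × ZMod r} (w : (RCR n d r).Walk u v) (k : Fin n)
    (hk : u.1 k ≠ v.1 k) : 1 ≤ flipsW k w := by
  induction w with
  | nil => exact absurd rfl hk
  | cons h p ih =>
    rename_i u' m' v'
    rw [flipsW_cons]
    by_cases hc : u'.1 k ≠ m'.1 k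
    · rw [if_pos hc]; omega
    · push_neg at hc
      have : m'.1 k ≠ v'.1 k := by rw [← hc]; exact hk
      have := ih this
      omega

/-- sum of steps is the total ring displacement -/
lemma sum_steps {u v : (Fin n → ZMod 2) × ZMod r} (w : (RCR n d r).Walk u v) :
    (((stepsW w).sum : ℤ) : ZMod r) = v.2 - u.2 := by
  induction w with
  | nil => simp [stepsW]
  | cons h p ih =>
    rename_i u' m' v'
    rw [stepsW_cons, List.sum_cons, Int.cast_add, ih]
    rw [adj_pos hd hr hdr h]
    ring

/-- every needed block is visited: there is a lift value in [minP, maxP] realizing it -/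
lemma visit {u v : (Fin n → ZMod 2) × ZMod r} (w : (RCR n d r).Walk u v) (k : Fin n)
    (hk : u.1 k ≠ v.1 k) :
    ∃ l : ℤ, minP (stepsW w) ≤ l ∧ l ≤ maxP (stepsW w) ∧
      u.2 + (l : ZMod r) = ((blk n d (k : ℕ) : ℕ) : ZMod r) := by
  haveI : NeZero r := ⟨by omega⟩
  induction w with
  | nil => exact absurd rfl hk
  | cons h p ih =>
    rename_i u' m' v'
    rw [stepsW_cons]
    by_cases hc : u'.1 k ≠ m'.1 k
    · -- the first edge flips k, so it is a cube edge at position u'.2 with blk k = u'.2.val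
      rcases adj_step hd hr hdr h with ⟨h1, -⟩ | ⟨-, -, k₀, hk₀, hk₂⟩
      · exact absurd (congrFun h1 k) hc
      · have hkk₀ : k = k₀ := by
          by_contra hne
          apply hc
          rw [hk₂, Function.update_of_ne hne]
        subst hkk₀
        refine ⟨0, ?_, ?_, ?_⟩
        · simp only [minP]
          have := minP_nonpos (stepsW p)
          omega
        · simp only [maxP]
          have := maxP_nonneg (stepsW p)
          omega
        · rw [hk₀]
          simp only [Int.cast_zero, add_zero]
          rw [ZMod.natCast_val, ZMod.cast_id]
    · push_neg at hc
      have hk' : m'.1 k ≠ v'.1 k := by rw [← hc]; exact hk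
      obtain ⟨l', h1, h2, h3⟩ := ih hk'
      refine ⟨stepOf u' m' + l', ?_, ?_, ?_⟩
      · simp only [minP]; omega
      · simp only [maxP]; omega
      · push_cast
        rw [← add_assoc, ← adj_pos hd hr hdr h]
        exact h3

end walkmeasures
end RCRAux

namespace RCRAux
section lower
variable {n d r : ℕ} (hd : 1 ≤ d) (hr : 3 ≤ r) (hdr : d * r = n)
include hd hr hdr

omit hd hdr in
lemma ring_lb (δv : ℕ) (hδv : δv = if r = 3 then 0 else r / 2)
    (M m e : ℤ) (N : ℕ) (hMm : (r : ℤ) ≤ M - m + 1)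
    (hkey : 2 * (M - m) ≤ (N : ℤ) + e.natAbs) (habs : e.natAbs ≤ N)
    (t : ℤ) (ht : e = (δv : ℤ) + (r : ℤ) * t) :
    (if r = 3 then r else 3 * r / 2 - 2) ≤ N := by
  have h2 : 2 * ((r : ℤ) - 1) ≤ (N : ℤ) + e.natAbs := by omega
  have hδ : (r = 3 ∧ δv = 0) ∨ (r ≠ 3 ∧ 2 * δv ≤ r ∧ r ≤ 2 * δv + 1) := by
    split_ifs at hδv with h3
    · exact Or.inl ⟨h3, hδv⟩
    · exact Or.inr ⟨h3, by omega, by omega⟩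
  rcases lt_trichotomy t 0 with htn | ht0 | htp
  · rcases eq_or_lt_of_le (by omega : t ≤ -1) with he1 | hlt2
    · -- t = -1
      have : e = (δv : ℤ) - r := by rw [ht, he1]; ring
      rcases hδ with ⟨h3, h4⟩ | ⟨h3, h4, h5⟩ <;> split_ifs <;> omega
    · -- t ≤ -2
      have htle : t ≤ -2 := by omega
      have hmul : (r : ℤ) * t ≤ (r : ℤ) * (-2) :=
        mul_le_mul_of_nonneg_left htle (by positivity)
      have : e ≤ (δv : ℤ) - 2 * r := by omega
      rcases hδ with ⟨h3, h4⟩ | ⟨h3, h4, h5⟩ <;> split_ifs <;> omega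
  · subst ht0
    have : e = (δv : ℤ) := by omega
    rcases hδ with ⟨h3, h4⟩ | ⟨h3, h4, h5⟩ <;> split_ifs <;> omega
  · have hmul : (r : ℤ) * 1 ≤ (r : ℤ) * t :=
      mul_le_mul_of_nonneg_left (by omega) (by positivity)
    have : (δv : ℤ) + r ≤ e := by omega
    rcases hδ with ⟨h3, h4⟩ | ⟨h3, h4, h5⟩ <;> split_ifs <;> omega

lemma walk_lower (δv : ℕ) (hδv : δv = if r = 3 then 0 else r / 2)
    (w : (RCR n d r).Walk ((fun _ => 0), (0 : ZMod r)) ((fun _ => 1), ((δv : ℕ) : ZMod r))) :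
    (if r = 3 then n + r else n + 3 * r / 2 - 2) ≤ w.length := by
  haveI : NeZero r := ⟨by omega⟩
  set L := stepsW w with hL
  set M := maxP L
  set m := minP L
  set e := L.sum
  set N := nzc L
  have hne : ∀ k : Fin n, (((fun _ => 0 : Fin n → ZMod 2), (0 : ZMod r)) :
      (Fin n → ZMod 2) × ZMod r).1 k ≠ (((fun _ => 1 : Fin n → ZMod 2), ((δv : ℕ) : ZMod r)) :
      (Fin n → ZMod 2) × ZMod r).1 k := by
    intro k
    show (0 : ZMod 2) ≠ 1
    decide
  -- total flips at least n
  have hC : n ≤ ∑ k : Fin n, flipsW k w := by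
    have h1 : (Finset.univ : Finset (Fin n)).card • 1 ≤ ∑ k : Fin n, flipsW k w :=
      Finset.card_nsmul_le_sum _ _ _ (fun k _ => flips_lb hd hr hdr w k (hne k))
    simpa using h1
  -- M - m ≥ r - 1
  have hsurj : Set.SurjOn (fun l : ℤ => ((l : ℤ) : ZMod r))
      ((Finset.Icc m M : Finset ℤ) : Set ℤ) ((Finset.univ : Finset (ZMod r)) : Set (ZMod r)) := by
    intro j _
    obtain ⟨k, hk⟩ := exists_coord_blk hd hr hdr j.val (ZMod.val_lt j)
    obtain ⟨l, h1, h2, h3⟩ := visit hd hr hdr w k (hne k)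
    refine ⟨l, ?_, ?_⟩
    · simp only [Finset.coe_Icc, Set.mem_Icc]
      exact ⟨h1, h2⟩
    · show ((l : ℤ) : ZMod r) = j
      have h3' : ((l : ℤ) : ZMod r) = ((blk n d (k : ℕ) : ℕ) : ZMod r) := by
        rw [← h3]
        exact (zero_add _).symm
      rw [h3', hk, ZMod.natCast_val, ZMod.cast_id]
  have hcard := Finset.card_le_card_of_surjOn _ hsurj
  rw [Finset.card_univ, ZMod.card, Int.card_Icc] at hcard
  have hMm : (r : ℤ) ≤ M - m + 1 := by omega
  -- key inequalities
  have hkey := key_ineq L (stepsW_good hd hr hdr w)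
  have habs := nzc_ge_natAbs L (stepsW_good hd hr hdr w)
  -- e ≡ δv mod r
  have hend := sum_steps hd hr hdr w
  simp only [sub_zero] at hend
  have hdvd : (r : ℤ) ∣ (e - (δv : ℤ)) := by
    rw [← ZMod.intCast_zmod_eq_zero_iff_dvd]
    push_cast
    rw [hend]
    push_cast
    ring
  obtain ⟨t, ht⟩ := hdvd
  have hN := ring_lb hr δv hδv M m e N hMm hkey habs t (by omega)
  have hlen := length_decomp hd hr hdr w
  rw [← hL] at hlen
  by_cases h3 : r = 3
  · rw [if_pos h3] at hN ⊢
    omega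
  · rw [if_neg h3] at hN ⊢
    omega

end lower
end RCRAux


open RCRAux in
/-- if `dr = n` and `r ≥ 3`, then
`diam(Q_n(d,r)) = n + r` if `r = 3` and `n + ⌊3r/2⌋ − 2` if `r ≥ 4`
(the diameter being the maximum of the distances over all pairs). -/
theorem stmt_17 (n d r : ℕ) (hn : 2 ≤ n) (hd : 1 ≤ d) (hr : 3 ≤ r)
    (hdr : d * r = n) :
    (∀ u v : (Fin n → ZMod 2) × ZMod r,
      (RCR n d r).dist u v ≤ (if r = 3 then n + r else n + 3 * r / 2 - 2)) ∧
    (∃ u v : (Fin n → ZMod 2) × ZMod r,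
      (RCR n d r).dist u v = (if r = 3 then n + r else n + 3 * r / 2 - 2)) := by
  haveI : NeZero r := ⟨by omega⟩
  constructor
  · exact fun u v => dist_upper hd hr hdr u v
  · set δv : ℕ := if r = 3 then 0 else r / 2 with hδv
    refine ⟨((fun _ => 0), (0 : ZMod r)), ((fun _ => 1), ((δv : ℕ) : ZMod r)), ?_⟩
    apply le_antisymm
    · exact dist_upper hd hr hdr _ _
    · -- reachability
      obtain ⟨w₁, -⟩ := walk_sweepF hd hr hdr r (fun _ => 0) (fun _ => 1) (0 : ZMod r) (by
        intro k hk
        exact covF hd hr hdr _ r (by omega) _ (blk_lt hd hr hdr _))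
      obtain ⟨w₂, -⟩ := walk_ringF hd hr hdr (fun _ => 1) ((0 : ZMod r) + ((r : ℕ) : ZMod r)) δv
      have hreach : (RCR n d r).Reachable ((fun _ => 0), (0 : ZMod r))
          ((fun _ => 1), ((δv : ℕ) : ZMod r)) := by
        refine ⟨(w₁.append w₂).copy rfl ?_⟩
        rw [ZMod.natCast_self]
        simp
      obtain ⟨w, hwl⟩ := hreach.exists_walk_length_eq_dist
      have := walk_lower hd hr hdr δv hδv w
      omega
end

section
/- Let dr ≥ 2n with dr ≡ 0 (mod n) and r ≥ 3. Then the diameter of Q_n(d,r) equals n + max{⌊r/2⌋, 2⌈n/d⌉ − 2}. -/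
open SimpleGraph Finset

section
variable {n d r : ℕ}

def ham (a b : Fin n → ZMod 2) : ℕ := (Finset.univ.filter fun k => a k ≠ b k).card

def ind (S : Finset (Fin n)) : Fin n → ZMod 2 := fun k => if k ∈ S then 1 else 0

lemma fin_cast_inj (hn : 1 ≤ n) (k k' : Fin n) (h : ((k : ℕ) : ZMod n) = ((k' : ℕ) : ZMod n)) :
    k = k' := by
  have := congrArg ZMod.val h
  rw [ZMod.val_natCast, ZMod.val_natCast] at this
  rw [Nat.mod_eq_of_lt k.2, Nat.mod_eq_of_lt k'.2] at this
  exact Fin.ext this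

lemma ebasis_apply (hn : 1 ≤ n) (k : Fin n) (j : ZMod n) (hj : ((k : ℕ) : ZMod n) = j) :
    Ebasis n j = fun k' => if k' = k then 1 else 0 := by
  funext k'
  unfold Ebasis
  congr 1
  rw [eq_iff_iff]
  constructor
  · intro h; exact fin_cast_inj hn k' k (by rw [h, hj])
  · intro h; rw [h, hj]

lemma adj_cube' (hn : 1 ≤ n) (a : Fin n → ZMod 2) (x : ZMod r) (i : ℕ)
    (h1 : 1 ≤ i) (h2 : i ≤ d) :
    (RCR n d r).Adj (a, x) (a + Ebasis n ((i : ZMod n) + (d : ZMod n) * ((x.val : ℕ) : ZMod n)), x) := by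
  rw [RCR, SimpleGraph.fromRel_adj]
  refine ⟨?_, Or.inl (Or.inr ⟨rfl, i, h1, h2, rfl⟩)⟩
  intro h
  have h1' := congrArg Prod.fst h
  simp only at h1'
  haveI : NeZero n := ⟨by omega⟩
  set j := (i : ZMod n) + (d : ZMod n) * ((x.val : ℕ) : ZMod n) with hj
  have hE : Ebasis n j = 0 := by
    funext k
    have := congrFun h1' k
    simp only [Pi.add_apply] at this
    show Ebasis n j k = 0
    exact left_eq_add.mp this
  have := congrFun hE ⟨j.val, j.val_lt⟩
  simp [Ebasis, ZMod.natCast_val, ZMod.cast_id] at this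

/-- do all flips of `S` at ring position `x` -/
lemma flip_walk (hn : 1 ≤ n) (x : ZMod r) (S : Finset (Fin n)) :
    ∀ a : Fin n → ZMod 2,
    (∀ k ∈ S, ∃ i : ℕ, 1 ≤ i ∧ i ≤ d ∧
        ((k : ℕ) : ZMod n) = (i : ZMod n) + (d : ZMod n) * ((x.val : ℕ) : ZMod n)) →
    ∃ W : (RCR n d r).Walk (a, x) (a + ind S, x), W.length = S.card := by
  classical
  induction S using Finset.induction_on with
  | empty =>
    intro a _
    have h : a + ind (∅ : Finset (Fin n)) = a := by funext k; simp [ind]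
    exact ⟨(SimpleGraph.Walk.nil' (a, x)).copy rfl (by rw [h]), by simp⟩
  | @insert k S hk IH =>
    intro a hS
    obtain ⟨i, hi1, hi2, hik⟩ := hS k (Finset.mem_insert_self k S)
    have hedge := adj_cube' (d := d) (r := r) hn a x i hi1 hi2
    rw [ebasis_apply hn k _ hik] at hedge
    set a' : Fin n → ZMod 2 := a + fun k' => if k' = k then 1 else 0 with ha'
    obtain ⟨W', hW'⟩ := IH a' (fun k' hk' => hS k' (Finset.mem_insert_of_mem hk'))
    have hfin : a' + ind S = a + ind (insert k S) := by
      funext k'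
      simp only [Pi.add_apply, ind, ha']
      by_cases h1 : k' = k
      · subst h1; simp [hk]
      · simp [h1, Finset.mem_insert, h1]
    refine ⟨(SimpleGraph.Walk.cons hedge W').copy rfl (by rw [hfin]), ?_⟩
    simp [hW', Finset.card_insert_of_notMem hk]

end

section
variable {n d r : ℕ}

lemma window_shift (hmod : (d * r) % n = 0) (hr : 3 ≤ r) (x y : ZMod r) (s : ℤ)
    (hs : (s : ZMod r) = x - y) :
    ((d * x.val : ℕ) : ZMod n) = ((d * y.val : ℕ) : ZMod n) + (d : ZMod n) * (s : ZMod n) := by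
  haveI : NeZero r := ⟨by omega⟩
  have h1 : (((x.val : ℤ) - (y.val : ℤ) - s : ℤ) : ZMod r) = 0 := by
    push_cast
    rw [ZMod.natCast_val, ZMod.natCast_val, ZMod.cast_id, ZMod.cast_id, hs]
    ring
  rw [ZMod.intCast_zmod_eq_zero_iff_dvd] at h1
  obtain ⟨q, hq⟩ := h1
  have hx : (x.val : ℤ) = (y.val : ℤ) + s + q * r := by linarith [hq]
  have hdr0 : ((d : ZMod n) * (r : ZMod n)) = 0 := by
    have : n ∣ d * r := Nat.dvd_of_mod_eq_zero hmod
    rcases this with ⟨c, hc⟩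
    have : ((d * r : ℕ) : ZMod n) = 0 := by rw [hc]; push_cast; simp
    push_cast at this; exact this
  have hx' : ((x.val : ℕ) : ZMod n) = ((y.val : ℕ) : ZMod n) + (s : ZMod n) + (q : ZMod n) * (r : ZMod n) := by
    exact_mod_cast congrArg (Int.cast : ℤ → ZMod n) hx
  push_cast
  linear_combination (d : ZMod n) * hx' + (q : ZMod n) * hdr0

lemma window_step (hmod : (d * r) % n = 0) (hr : 3 ≤ r) (x : ZMod r) :
    (d : ZMod n) * (((x+1).val : ℕ) : ZMod n) = (d : ZMod n) * ((x.val : ℕ) : ZMod n) + (d : ZMod n) := by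
  have h := window_shift (n := n) hmod hr (x+1) x 1 (by push_cast; ring)
  push_cast at h
  linear_combination h

lemma window_step_down (hmod : (d * r) % n = 0) (hr : 3 ≤ r) (x : ZMod r) :
    (d : ZMod n) * (((x-1).val : ℕ) : ZMod n) = (d : ZMod n) * ((x.val : ℕ) : ZMod n) - (d : ZMod n) := by
  have h := window_shift (n := n) hmod hr (x-1) x (-1) (by push_cast; ring)
  push_cast at h
  linear_combination h

lemma zmod2_step (u v : ZMod 2) (h : u ≠ v) : v = u + 1 := by revert h; revert u v; decide

lemma add_ind_eq (a b : Fin n → ZMod 2) :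
    a + ind (Finset.univ.filter fun k => a k ≠ b k) = b := by
  classical
  funext k
  simp only [Pi.add_apply, ind, Finset.mem_filter, Finset.mem_univ, true_and]
  by_cases h : a k = b k
  · simp [h]
  · simp [h, (zmod2_step _ _ h).symm]

/-- forward segment walk -/
lemma seg_walk (hn : 1 ≤ n) (hr : 3 ≤ r) (hmod : (d * r) % n = 0) :
    ∀ (s : ℕ) (a b : Fin n → ZMod 2) (x : ZMod r),
    (∀ k : Fin n, a k ≠ b k → ∃ j : ℕ, j ≤ s ∧ ∃ i : ℕ, 1 ≤ i ∧ i ≤ d ∧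
        ((k : ℕ) : ZMod n) = (i : ZMod n) + (d : ZMod n) * ((x.val : ℕ) : ZMod n)
          + (d : ZMod n) * (j : ZMod n)) →
    ∃ W : (RCR n d r).Walk (a, x) (b, x + (s : ℕ)), W.length ≤ ham a b + s := by
  classical
  intro s
  induction s with
  | zero =>
    intro a b x hcov
    obtain ⟨W, hW⟩ := flip_walk (d := d) (r := r) hn x (Finset.univ.filter fun k => a k ≠ b k) a
      (by
        intro k hk
        simp only [Finset.mem_filter, Finset.mem_univ, true_and] at hk
        obtain ⟨j, hj, i, hi1, hi2, hik⟩ := hcov k hk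
        interval_cases j
        exact ⟨i, hi1, hi2, by rw [hik]; push_cast; ring⟩)
    refine ⟨W.copy rfl (by rw [add_ind_eq]; simp), ?_⟩
    simp [hW, ham]
  | succ s IH =>
    intro a b x hcov
    set D₀ : Finset (Fin n) := Finset.univ.filter (fun k => a k ≠ b k ∧ ∃ i ∈ Finset.Icc 1 d,
      ((k : ℕ) : ZMod n) = (i : ZMod n) + (d : ZMod n) * ((x.val : ℕ) : ZMod n)) with hD₀
    set a' := a + ind D₀ with ha'
    obtain ⟨W₀, hW₀⟩ := flip_walk (d := d) (r := r) hn x D₀ a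
      (by
        intro k hk
        simp only [hD₀, Finset.mem_filter, Finset.mem_univ, true_and, Finset.mem_Icc] at hk
        obtain ⟨-, i, ⟨hi1, hi2⟩, hik⟩ := hk
        exact ⟨i, hi1, hi2, hik⟩)
    have hstep : (RCR n d r).Adj (a', x) (a', x + 1) := by
      haveI : Fact (1 < r) := ⟨by omega⟩
      rw [RCR, SimpleGraph.fromRel_adj]
      refine ⟨?_, Or.inl (Or.inl ⟨rfl, rfl⟩)⟩
      intro h
      have h2 := congrArg Prod.snd h
      simp only at h2
      exact one_ne_zero (left_eq_add.mp h2)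
    obtain ⟨W', hW'⟩ := IH a' b (x + 1)
      (by
        intro k hk'
        have hknD₀ : k ∉ D₀ := by
          intro hmem
          apply hk'
          have : a' k = a k + 1 := by simp [ha', ind, Pi.add_apply, hmem]
          rw [this]
          simp only [hD₀, Finset.mem_filter, Finset.mem_univ, true_and] at hmem
          rw [← zmod2_step _ _ hmem.1]
        have hkD : a k ≠ b k := by
          intro heq
          apply hk'
          have : a' k = a k := by
            simp only [ha', Pi.add_apply, ind]
            rw [if_neg hknD₀, add_zero]
          rw [this, heq]
        obtain ⟨j, hj, i, hi1, hi2, hik⟩ := hcov k hkD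
        have hj1 : 1 ≤ j := by
          rcases Nat.eq_zero_or_pos j with h0 | h1
          · exfalso
            apply hknD₀
            simp only [hD₀, Finset.mem_filter, Finset.mem_univ, true_and, Finset.mem_Icc]
            exact ⟨hkD, i, ⟨hi1, hi2⟩, by rw [hik, h0]; push_cast; ring⟩
          · exact h1
        refine ⟨j - 1, by omega, i, hi1, hi2, ?_⟩
        rw [hik]
        have hws := window_step (n := n) hmod hr x
        have hcj : ((j - 1 : ℕ) : ZMod n) = (j : ZMod n) - 1 := by
          push_cast [Nat.cast_sub hj1]; ring
        rw [hcj, hws]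
        ring)
    have hend : x + ((s : ℕ) + 1 : ℕ) = (x + 1) + (s : ℕ) := by push_cast; ring
    refine ⟨(W₀.append (SimpleGraph.Walk.cons hstep W')).copy rfl (by rw [← hend]), ?_⟩
    rw [SimpleGraph.Walk.length_copy, SimpleGraph.Walk.length_append,
      SimpleGraph.Walk.length_cons, hW₀]
    have hham : ham a' b + D₀.card = ham a b := by
      have hsub : (Finset.univ.filter fun k => a' k ≠ b k)
          = (Finset.univ.filter fun k => a k ≠ b k) \ D₀ := by
        ext k
        simp only [Finset.mem_filter, Finset.mem_univ, true_and, Finset.mem_sdiff]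
        constructor
        · intro hk
          have hknD₀ : k ∉ D₀ := by
            intro hmem
            apply hk
            have : a' k = a k + 1 := by simp [ha', ind, Pi.add_apply, hmem]
            rw [this]
            simp only [hD₀, Finset.mem_filter, Finset.mem_univ, true_and] at hmem
            rw [← zmod2_step _ _ hmem.1]
          have : a' k = a k := by
            simp only [ha', Pi.add_apply, ind]
            rw [if_neg hknD₀, add_zero]
          rw [this] at hk
          exact ⟨by simpa using hk, hknD₀⟩
        · intro ⟨hk, hknD₀⟩
          have : a' k = a k := by
            simp only [ha', Pi.add_apply, ind]
            rw [if_neg hknD₀, add_zero]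
          rw [this]
          simpa using hk
      have hD₀sub : D₀ ⊆ Finset.univ.filter fun k => a k ≠ b k := by
        intro k hk
        simp only [hD₀, Finset.mem_filter, Finset.mem_univ, true_and] at hk ⊢
        exact hk.1
      rw [ham, ham, hsub, Finset.card_sdiff_of_subset hD₀sub]
      have := Finset.card_le_card hD₀sub
      omega
    omega

end

section
variable {n d r : ℕ}

/-- backward segment walk -/
lemma seg_walk' (hn : 1 ≤ n) (hr : 3 ≤ r) (hmod : (d * r) % n = 0) :
    ∀ (s : ℕ) (a b : Fin n → ZMod 2) (x : ZMod r),
    (∀ k : Fin n, a k ≠ b k → ∃ j : ℕ, j ≤ s ∧ ∃ i : ℕ, 1 ≤ i ∧ i ≤ d ∧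
        ((k : ℕ) : ZMod n) = (i : ZMod n) + (d : ZMod n) * ((x.val : ℕ) : ZMod n)
          - (d : ZMod n) * (j : ZMod n)) →
    ∃ W : (RCR n d r).Walk (a, x) (b, x - (s : ℕ)), W.length ≤ ham a b + s := by
  classical
  intro s
  induction s with
  | zero =>
    intro a b x hcov
    obtain ⟨W, hW⟩ := flip_walk (d := d) (r := r) hn x (Finset.univ.filter fun k => a k ≠ b k) a
      (by
        intro k hk
        simp only [Finset.mem_filter, Finset.mem_univ, true_and] at hk
        obtain ⟨j, hj, i, hi1, hi2, hik⟩ := hcov k hk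
        interval_cases j
        exact ⟨i, hi1, hi2, by rw [hik]; push_cast; ring⟩)
    refine ⟨W.copy rfl (by rw [add_ind_eq]; simp), ?_⟩
    simp [hW, ham]
  | succ s IH =>
    intro a b x hcov
    set D₀ : Finset (Fin n) := Finset.univ.filter (fun k => a k ≠ b k ∧ ∃ i ∈ Finset.Icc 1 d,
      ((k : ℕ) : ZMod n) = (i : ZMod n) + (d : ZMod n) * ((x.val : ℕ) : ZMod n)) with hD₀
    set a' := a + ind D₀ with ha'
    obtain ⟨W₀, hW₀⟩ := flip_walk (d := d) (r := r) hn x D₀ a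
      (by
        intro k hk
        simp only [hD₀, Finset.mem_filter, Finset.mem_univ, true_and, Finset.mem_Icc] at hk
        obtain ⟨-, i, ⟨hi1, hi2⟩, hik⟩ := hk
        exact ⟨i, hi1, hi2, hik⟩)
    have hstep : (RCR n d r).Adj (a', x) (a', x - 1) := by
      haveI : Fact (1 < r) := ⟨by omega⟩
      rw [RCR, SimpleGraph.fromRel_adj]
      constructor
      · intro h
        have h2 := congrArg Prod.snd h
        simp only at h2
        have : x - 1 + 1 = x + 1 := by rw [← h2]
        rw [sub_add_cancel] at this
        exact one_ne_zero (left_eq_add.mp this)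
      · right; left; exact ⟨rfl, by rw [sub_add_cancel]⟩
    obtain ⟨W', hW'⟩ := IH a' b (x - 1)
      (by
        intro k hk'
        have hknD₀ : k ∉ D₀ := by
          intro hmem
          apply hk'
          have : a' k = a k + 1 := by simp [ha', ind, Pi.add_apply, hmem]
          rw [this]
          simp only [hD₀, Finset.mem_filter, Finset.mem_univ, true_and] at hmem
          rw [← zmod2_step _ _ hmem.1]
        have hkD : a k ≠ b k := by
          intro heq
          apply hk'
          have : a' k = a k := by
            simp only [ha', Pi.add_apply, ind]
            rw [if_neg hknD₀, add_zero]
          rw [this, heq]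
        obtain ⟨j, hj, i, hi1, hi2, hik⟩ := hcov k hkD
        have hj1 : 1 ≤ j := by
          rcases Nat.eq_zero_or_pos j with h0 | h1
          · exfalso
            apply hknD₀
            simp only [hD₀, Finset.mem_filter, Finset.mem_univ, true_and, Finset.mem_Icc]
            exact ⟨hkD, i, ⟨hi1, hi2⟩, by rw [hik, h0]; push_cast; ring⟩
          · exact h1
        refine ⟨j - 1, by omega, i, hi1, hi2, ?_⟩
        rw [hik]
        have hws := window_step_down (n := n) hmod hr x
        have hcj : ((j - 1 : ℕ) : ZMod n) = (j : ZMod n) - 1 := by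
          push_cast [Nat.cast_sub hj1]; ring
        rw [hcj, hws]
        ring)
    have hend : x - ((s : ℕ) + 1 : ℕ) = (x - 1) - (s : ℕ) := by push_cast; ring
    refine ⟨(W₀.append (SimpleGraph.Walk.cons hstep W')).copy rfl (by rw [← hend]), ?_⟩
    rw [SimpleGraph.Walk.length_copy, SimpleGraph.Walk.length_append,
      SimpleGraph.Walk.length_cons, hW₀]
    have hham : ham a' b + D₀.card = ham a b := by
      have hsub : (Finset.univ.filter fun k => a' k ≠ b k)
          = (Finset.univ.filter fun k => a k ≠ b k) \ D₀ := by
        ext k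
        simp only [Finset.mem_filter, Finset.mem_univ, true_and, Finset.mem_sdiff]
        constructor
        · intro hk
          have hknD₀ : k ∉ D₀ := by
            intro hmem
            apply hk
            have : a' k = a k + 1 := by simp [ha', ind, Pi.add_apply, hmem]
            rw [this]
            simp only [hD₀, Finset.mem_filter, Finset.mem_univ, true_and] at hmem
            rw [← zmod2_step _ _ hmem.1]
          have : a' k = a k := by
            simp only [ha', Pi.add_apply, ind]
            rw [if_neg hknD₀, add_zero]
          rw [this] at hk
          exact ⟨by simpa using hk, hknD₀⟩
        · intro ⟨hk, hknD₀⟩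
          have : a' k = a k := by
            simp only [ha', Pi.add_apply, ind]
            rw [if_neg hknD₀, add_zero]
          rw [this]
          simpa using hk
      have hD₀sub : D₀ ⊆ Finset.univ.filter fun k => a k ≠ b k := by
        intro k hk
        simp only [hD₀, Finset.mem_filter, Finset.mem_univ, true_and] at hk ⊢
        exact hk.1
      rw [ham, ham, hsub, Finset.card_sdiff_of_subset hD₀sub]
      have := Finset.card_le_card hD₀sub
      omega
    omega

end

section
variable {n d r : ℕ}

lemma ceil_div_aux (hn : 1 ≤ n) (hd : 1 ≤ d) : (n + d - 1) / d = (n - 1) / d + 1 := by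
  have : n + d - 1 = (n - 1) + d := by omega
  rw [this, Nat.add_div_right _ (by omega)]

lemma cover_fwd (hn : 1 ≤ n) (hd : 1 ≤ d) (w0 c : ZMod n) :
    ∃ j : ℕ, j ≤ (n + d - 1) / d - 1 ∧ ∃ i : ℕ, 1 ≤ i ∧ i ≤ d ∧
      c = (i : ZMod n) + w0 + (d : ZMod n) * (j : ZMod n) := by
  haveI : NeZero n := ⟨by omega⟩
  set e := (c - w0 - 1 : ZMod n).val with he
  have hlt : e < n := ZMod.val_lt _
  have hmd : e % d < d := Nat.mod_lt _ (by omega)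
  refine ⟨e / d, ?_, e % d + 1, by omega, by omega, ?_⟩
  · rw [ceil_div_aux hn hd]
    simp only [Nat.add_sub_cancel]
    exact Nat.div_le_div_right (by omega)
  · have hcast : ((e : ℕ) : ZMod n) = c - w0 - 1 := by
      rw [he, ZMod.natCast_val, ZMod.cast_id]
    have hsplit : e = d * (e / d) + e % d := (Nat.div_add_mod e d).symm
    have : ((d * (e / d) + e % d : ℕ) : ZMod n) = c - w0 - 1 := by rw [← hsplit, hcast]
    push_cast at this
    push_cast
    linear_combination -this

lemma cover_bwd (hn : 1 ≤ n) (hd : 1 ≤ d) (w0 c : ZMod n) :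
    ∃ j : ℕ, j ≤ (n + d - 1) / d - 1 ∧ ∃ i : ℕ, 1 ≤ i ∧ i ≤ d ∧
      c = (i : ZMod n) + w0 - (d : ZMod n) * (j : ZMod n) := by
  haveI : NeZero n := ⟨by omega⟩
  set e := (w0 + (d : ZMod n) - c : ZMod n).val with he
  have hlt : e < n := ZMod.val_lt _
  have hmd : e % d < d := Nat.mod_lt _ (by omega)
  refine ⟨e / d, ?_, d - e % d, by omega, by omega, ?_⟩
  · rw [ceil_div_aux hn hd]
    simp only [Nat.add_sub_cancel]
    exact Nat.div_le_div_right (by omega)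
  · have hcast : ((e : ℕ) : ZMod n) = w0 + (d : ZMod n) - c := by
      rw [he, ZMod.natCast_val, ZMod.cast_id]
    have hsplit : e = d * (e / d) + e % d := (Nat.div_add_mod e d).symm
    have h2 : ((d * (e / d) + e % d : ℕ) : ZMod n) = w0 + (d : ZMod n) - c := by
      rw [← hsplit, hcast]
    have hc2 : ((d - e % d : ℕ) : ZMod n) = (d : ZMod n) - ((e % d : ℕ) : ZMod n) := by
      push_cast [Nat.cast_sub (by omega : e % d ≤ d)]
      ring
      
    rw [hc2]
    push_cast at h2
    push_cast
    linear_combination h2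

lemma ham_le (a b : Fin n → ZMod 2) : ham a b ≤ n := by
  calc ham a b ≤ Finset.univ.card := Finset.card_le_card (Finset.filter_subset _ _)
  _ = n := by simp

lemma natCast_val_zmod (hr : 3 ≤ r) (z : ZMod r) : ((z.val : ℕ) : ZMod r) = z := by
  haveI : NeZero r := ⟨by omega⟩
  rw [ZMod.natCast_val, ZMod.cast_id]

lemma reach_le (hn : 2 ≤ n) (hd : 1 ≤ d) (hr : 3 ≤ r) (hmod : (d * r) % n = 0)
    (u v : (Fin n → ZMod 2) × ZMod r) :
    ∃ W : (RCR n d r).Walk u v,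
      W.length ≤ n + max (r / 2) (2 * ((n + d - 1) / d) - 2) := by
  obtain ⟨a, x⟩ := u
  obtain ⟨b, y⟩ := v
  haveI : NeZero r := ⟨by omega⟩
  set m := (n + d - 1) / d with hm
  have hm1 : 1 ≤ m := by
    rw [hm, ceil_div_aux (by omega) hd]
    exact Nat.le_add_left 1 _
  -- distances on ring
  have hvalsum : y = x ∨ ((y - x).val + (x - y).val = r) := by
    by_cases h : y = x
    · left; exact h
    · right
      have hne : y - x ≠ 0 := fun hc => h (by rwa [sub_eq_zero] at hc)
      have : (x - y) = -(y - x) := by ring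
      rw [this, ZMod.neg_val, if_neg hne]
      have := ZMod.val_lt (y - x)
      have := ZMod.val_pos.mpr hne
      omega
  rcases le_or_gt ((y - x).val) ((x - y).val) with hdir | hdir
  · -- forward
    set t := (y - x).val with ht
    have ht2 : t ≤ r / 2 := by
      rcases hvalsum with h | h
      · simp [ht, h]
      · omega
    set s := max t (m - 1) with hs
    obtain ⟨W₁, hW₁⟩ := seg_walk (by omega : 1 ≤ n) hr hmod s a b x
      (by
        intro k hk
        obtain ⟨j, hj, i, hi1, hi2, hik⟩ :=
          cover_fwd (by omega : 1 ≤ n) hd ((d : ZMod n) * ((x.val : ℕ) : ZMod n)) ((k : ℕ) : ZMod n)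
        exact ⟨j, by omega, i, hi1, hi2, by rw [hik]⟩)
    obtain ⟨W₂, hW₂⟩ := seg_walk' (by omega : 1 ≤ n) hr hmod (s - t) b b (x + (s : ℕ))
      (by intro k hk; exact absurd rfl hk)
    have hend : (x + (s : ℕ)) - ((s - t : ℕ) : ZMod r) = y := by
      push_cast [Nat.cast_sub (show t ≤ s from le_max_left t (m - 1))]
      have : ((t : ℕ) : ZMod r) = y - x := by rw [ht, natCast_val_zmod hr]
      rw [this]  -- x + s - (s - (y - x)) = y
      ring
    refine ⟨(W₁.append W₂).copy rfl (by rw [hend]), ?_⟩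
    rw [SimpleGraph.Walk.length_copy, SimpleGraph.Walk.length_append]
    have h1 := ham_le a b
    have h2 : ham b b = 0 := by simp [ham]
    have harith : s + (s - t) ≤ max (r / 2) (2 * m - 2) := by
      rcases le_or_gt (m - 1) t with hc | hc
      · have : s = t := by rw [hs]; omega
        rw [this]
        simp only [Nat.sub_self, add_zero]
        exact le_max_of_le_left ht2
      · have : s = m - 1 := by rw [hs]; omega
        rw [this]
        refine le_max_of_le_right ?_
        omega
    omega
  · -- backward
    set t := (x - y).val with ht
    have ht2 : t ≤ r / 2 := by
      rcases hvalsum with h | h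
      · simp [ht, h]
      · omega
    set s := max t (m - 1) with hs
    obtain ⟨W₁, hW₁⟩ := seg_walk' (by omega : 1 ≤ n) hr hmod s a b x
      (by
        intro k hk
        obtain ⟨j, hj, i, hi1, hi2, hik⟩ :=
          cover_bwd (by omega : 1 ≤ n) hd ((d : ZMod n) * ((x.val : ℕ) : ZMod n)) ((k : ℕ) : ZMod n)
        exact ⟨j, by omega, i, hi1, hi2, by rw [hik]⟩)
    obtain ⟨W₂, hW₂⟩ := seg_walk (by omega : 1 ≤ n) hr hmod (s - t) b b (x - (s : ℕ))
      (by intro k hk; exact absurd rfl hk)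
    have hend : (x - (s : ℕ)) + ((s - t : ℕ) : ZMod r) = y := by
      push_cast [Nat.cast_sub (show t ≤ s from le_max_left t (m - 1))]
      have : ((t : ℕ) : ZMod r) = x - y := by rw [ht, natCast_val_zmod hr]
      rw [this]
      ring
    refine ⟨(W₁.append W₂).copy rfl (by rw [hend]), ?_⟩
    rw [SimpleGraph.Walk.length_copy, SimpleGraph.Walk.length_append]
    have h1 := ham_le a b
    have h2 : ham b b = 0 := by simp [ham]
    have harith : s + (s - t) ≤ max (r / 2) (2 * m - 2) := by
      rcases le_or_gt (m - 1) t with hc | hc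
      · have : s = t := by rw [hs]; omega
        rw [this]
        simp only [Nat.sub_self, add_zero]
        exact le_max_of_le_left ht2
      · have : s = m - 1 := by rw [hs]; omega
        rw [this]
        refine le_max_of_le_right ?_
        omega
    omega

end

section
variable {n d r : ℕ}

def ringCount : ∀ {u v : (Fin n → ZMod 2) × ZMod r}, (RCR n d r).Walk u v → ℕ
  | _, _, SimpleGraph.Walk.nil => 0
  | u, _, SimpleGraph.Walk.cons (v := w) _ W => (if u.2 = w.2 then 0 else 1) + ringCount W

def cubeCount : ∀ {u v : (Fin n → ZMod 2) × ZMod r}, (RCR n d r).Walk u v → ℕ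
  | _, _, SimpleGraph.Walk.nil => 0
  | u, _, SimpleGraph.Walk.cons (v := w) _ W => (if u.2 = w.2 then 1 else 0) + cubeCount W

lemma length_eq_counts {u v : (Fin n → ZMod 2) × ZMod r} (W : (RCR n d r).Walk u v) :
    W.length = ringCount W + cubeCount W := by
  induction W with
  | nil => simp [ringCount, cubeCount]
  | cons h W IH =>
    rw [SimpleGraph.Walk.length_cons, ringCount, cubeCount, IH]
    split <;> omega

lemma pi_add_self (v : Fin n → ZMod 2) : v + v = 0 := by
  funext k
  have : ∀ x : ZMod 2, x + x = 0 := by decide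
  exact this (v k)

lemma adj_cases (hr : 3 ≤ r) {p q : (Fin n → ZMod 2) × ZMod r} (h : (RCR n d r).Adj p q) :
    (p.1 = q.1 ∧ p.2 ≠ q.2 ∧ (q.2 = p.2 + 1 ∨ p.2 = q.2 + 1)) ∨
    (p.2 = q.2 ∧ ∃ i : ℕ, 1 ≤ i ∧ i ≤ d ∧
      q.1 = p.1 + Ebasis n ((i : ZMod n) + (d : ZMod n) * ((p.2.val : ℕ) : ZMod n))) := by
  haveI : Fact (1 < r) := ⟨by omega⟩
  rw [RCR, SimpleGraph.fromRel_adj] at h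
  obtain ⟨hne, hrel⟩ := h
  have ringne : ∀ z : ZMod r, z ≠ z + 1 := by
    intro z hz
    exact one_ne_zero (left_eq_add.mp hz)
  rcases hrel with (⟨h1, h2⟩ | ⟨h1, i, hi1, hi2, hik⟩) | (⟨h1, h2⟩ | ⟨h1, i, hi1, hi2, hik⟩)
  · exact Or.inl ⟨h1, by rw [h2]; exact ringne p.2, Or.inl h2⟩
  · exact Or.inr ⟨h1, i, hi1, hi2, hik⟩
  · exact Or.inl ⟨h1.symm, by rw [h2]; exact fun hc => ringne q.2 hc.symm, Or.inr h2⟩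
  · refine Or.inr ⟨h1.symm, i, hi1, hi2, ?_⟩
    rw [h1] at hik
    rw [hik, add_assoc, pi_add_self, add_zero]

lemma ham_triangle (a b c : Fin n → ZMod 2) : ham a c ≤ ham a b + ham b c := by
  classical
  unfold ham
  calc (Finset.univ.filter fun k => a k ≠ c k).card
      ≤ ((Finset.univ.filter fun k => a k ≠ b k) ∪ (Finset.univ.filter fun k => b k ≠ c k)).card := by
        apply Finset.card_le_card
        intro k hk
        simp only [Finset.mem_filter, Finset.mem_univ, true_and, Finset.mem_union] at hk ⊢
        by_contra hcon
        push_neg at hcon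
        obtain ⟨h1, h2⟩ := hcon
        exact hk (h1.trans h2)
    _ ≤ _ := Finset.card_union_le _ _

lemma ham_ebasis (hn : 1 ≤ n) (a : Fin n → ZMod 2) (j : ZMod n) :
    ham a (a + Ebasis n j) ≤ 1 := by
  classical
  unfold ham
  rw [Finset.card_le_one]
  intro k hk k' hk'
  simp only [Finset.mem_filter, Finset.mem_univ, true_and, Pi.add_apply] at hk hk'
  have h1 : Ebasis n j k ≠ 0 := fun hc => hk (by rw [hc, add_zero])
  have h2 : Ebasis n j k' ≠ 0 := fun hc => hk' (by rw [hc, add_zero])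
  have h1' : ((k : ℕ) : ZMod n) = j := by
    by_contra hc; apply h1; simp [Ebasis, hc]
  have h2' : ((k' : ℕ) : ZMod n) = j := by
    by_contra hc; apply h2; simp [Ebasis, hc]
  exact fin_cast_inj hn k k' (h1'.trans h2'.symm)

lemma ham_le_cubeCount (hn : 1 ≤ n) (hr : 3 ≤ r) {u v : (Fin n → ZMod 2) × ZMod r}
    (W : (RCR n d r).Walk u v) : ham u.1 v.1 ≤ cubeCount W := by
  induction W with
  | nil => simp [ham, cubeCount]
  | @cons u w v h W IH =>
    rw [cubeCount]
    rcases adj_cases hr h with ⟨h1, h2, -⟩ | ⟨h1, i, -, -, hik⟩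
    · rw [if_neg h2, zero_add]
      calc ham u.1 v.1 ≤ ham u.1 w.1 + ham w.1 v.1 := ham_triangle _ _ _
        _ = ham w.1 v.1 := by rw [h1]; simp [ham]
        _ ≤ cubeCount W := IH
    · rw [if_pos h1]
      calc ham u.1 v.1 ≤ ham u.1 w.1 + ham w.1 v.1 := ham_triangle _ _ _
        _ ≤ 1 + cubeCount W := by
            have := ham_ebasis hn u.1 ((i : ZMod n) + (d : ZMod n) * ((u.2.val : ℕ) : ZMod n))
            rw [← hik] at this
            omega

end

section
variable {n d r : ℕ}

lemma ring_invariant (hn : 1 ≤ n) (hr : 3 ≤ r) (hmod : (d * r) % n = 0)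
    {u v : (Fin n → ZMod 2) × ZMod r} (W : (RCR n d r).Walk u v) :
    ∃ lo hi s : ℤ, lo ≤ 0 ∧ 0 ≤ hi ∧ lo ≤ s ∧ s ≤ hi ∧
      ((s : ZMod r) = u.2 - v.2) ∧
      (hi - lo) + min ((s - lo) + hi) ((hi - s) + (-lo)) ≤ (ringCount W : ℤ) ∧
      (∀ k : Fin n, u.1 k ≠ v.1 k → ∃ z : ℤ, lo ≤ z ∧ z ≤ hi ∧ ∃ i : ℕ, 1 ≤ i ∧ i ≤ d ∧
        ((k : ℕ) : ZMod n) = (i : ZMod n) + (d : ZMod n) * ((v.2.val : ℕ) : ZMod n)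
          + (d : ZMod n) * ((z : ℤ) : ZMod n)) := by
  induction W with
  | nil =>
    exact ⟨0, 0, 0, le_refl _, le_refl _, le_refl _, le_refl _, by simp,
      by simp [ringCount], fun k hk => absurd rfl hk⟩
  | @cons u w v h W IH =>
    obtain ⟨lo, hi, s, hlo, hhi, hls, hsh, hcast, hbound, hflip⟩ := IH
    rcases adj_cases hr h with ⟨h1, h2, hring⟩ | ⟨h1, i, hi1, hi2, hik⟩
    · -- ring edge
      have hRC : (ringCount (SimpleGraph.Walk.cons h W) : ℤ) = 1 + ringCount W := by
        rw [ringCount, if_neg h2]; push_cast; ring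
      rcases hring with hup | hdown
      · -- w.2 = u.2 + 1, so new s = s - 1
        refine ⟨min lo (s-1), hi, s - 1, by omega, hhi, by omega, by omega, ?_, ?_, ?_⟩
        · push_cast
          rw [hcast, hup]
          ring
        · rw [hRC]
          omega
        · intro k hk
          rw [show u.1 = w.1 from h1] at hk
          obtain ⟨z, hz1, hz2, i', hi1, hi2, hik⟩ := hflip k hk
          exact ⟨z, by omega, hz2, i', hi1, hi2, hik⟩
      · -- u.2 = w.2 + 1, new s = s + 1
        refine ⟨lo, max hi (s+1), s + 1, hlo, by omega, by omega, by omega, ?_, ?_, ?_⟩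
        · push_cast
          rw [hcast, hdown]
          ring
        · rw [hRC]
          omega
        · intro k hk
          rw [show u.1 = w.1 from h1] at hk
          obtain ⟨z, hz1, hz2, i', hi1, hi2, hik⟩ := hflip k hk
          exact ⟨z, hz1, by omega, i', hi1, hi2, hik⟩
    · -- cube edge
      have hRC : (ringCount (SimpleGraph.Walk.cons h W) : ℤ) = ringCount W := by
        rw [ringCount, if_pos h1]; push_cast; ring
      have hcast' : (s : ZMod r) = u.2 - v.2 := by rw [h1]; exact hcast
      refine ⟨lo, hi, s, hlo, hhi, hls, hsh, hcast', by rw [hRC]; exact hbound, ?_⟩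
      intro k hk
      by_cases hwk : w.1 k ≠ v.1 k
      · exact hflip k hwk
      · rw [not_not] at hwk
        have huw : u.1 k ≠ w.1 k := by rw [hwk]; exact hk
        rw [hik] at huw
        simp only [Pi.add_apply] at huw
        have hE : Ebasis n ((i : ZMod n) + (d : ZMod n) * ((u.2.val : ℕ) : ZMod n)) k ≠ 0 :=
          fun hc => huw (by rw [hc, add_zero])
        have hkey : ((k : ℕ) : ZMod n) = (i : ZMod n) + (d : ZMod n) * ((u.2.val : ℕ) : ZMod n) := by
          by_contra hc; apply hE; simp [Ebasis, hc]
        have hws := window_shift (n := n) hmod hr u.2 v.2 s hcast'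
        refine ⟨s, hls, hsh, i, hi1, hi2, ?_⟩
        rw [hkey]
        push_cast at hws ⊢
        linear_combination hws

end

section
variable {n d r : ℕ}

lemma val_min_le_natAbs (hr : 3 ≤ r) (s : ℤ) (c : ZMod r) (h : (s : ZMod r) = c) :
    min c.val ((-c).val) ≤ s.natAbs := by
  haveI : NeZero r := ⟨by omega⟩
  rcases le_or_gt 0 s with hs | hs
  · have e1 : ((s.natAbs : ℤ)) = s := Int.natAbs_of_nonneg hs
    have h1 : ((s.natAbs : ℕ) : ZMod r) = c := by
      rw [← h, ← Int.cast_natCast (R := ZMod r) s.natAbs, e1]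
    have := ZMod.val_natCast (n := r) s.natAbs
    rw [h1] at this
    calc min c.val ((-c).val) ≤ c.val := min_le_left _ _
      _ = s.natAbs % r := this
      _ ≤ s.natAbs := Nat.mod_le _ _
  · have e1 : ((s.natAbs : ℤ)) = -s := by omega
    have h1 : ((s.natAbs : ℕ) : ZMod r) = -c := by
      rw [← Int.cast_natCast (R := ZMod r) s.natAbs, e1, Int.cast_neg, h]
    have := ZMod.val_natCast (n := r) s.natAbs
    rw [h1] at this
    calc min c.val ((-c).val) ≤ (-c).val := min_le_right _ _
      _ = s.natAbs % r := this
      _ ≤ s.natAbs := Nat.mod_le _ _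

lemma lb_ring (hn : 1 ≤ n) (hr : 3 ≤ r) (hmod : (d * r) % n = 0)
    {u v : (Fin n → ZMod 2) × ZMod r} (W : (RCR n d r).Walk u v) :
    min ((u.2 - v.2).val) ((v.2 - u.2).val) ≤ ringCount W := by
  obtain ⟨lo, hi, s, hlo, hhi, hls, hsh, hcast, hbound, -⟩ := ring_invariant hn hr hmod W
  have h1 : min ((u.2 - v.2).val) ((v.2 - u.2).val) ≤ s.natAbs := by
    have := val_min_le_natAbs hr s (u.2 - v.2) hcast
    have hneg : -(u.2 - v.2) = v.2 - u.2 := by ring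
    rw [hneg] at this
    exact this
  have h2 : (s.natAbs : ℤ) ≤ hi - lo := by omega
  have h3 : (hi - lo : ℤ) ≤ ringCount W := by omega
  omega

lemma ham_zero_one (hn : 1 ≤ n) :
    ham (fun _ : Fin n => (0 : ZMod 2)) (fun _ => 1) = n := by
  unfold ham
  have : (Finset.univ.filter fun _ : Fin n => (0 : ZMod 2) ≠ 1) = Finset.univ := by
    apply Finset.filter_true_of_mem
    intro k _
    decide
  rw [this]
  simp

lemma dm_le (hd : 1 ≤ d) : d * ((n + d - 1) / d) ≤ n + d - 1 := by
  rw [mul_comm]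
  exact Nat.div_mul_le_self _ _

lemma r_ge (hn : 1 ≤ n) (hd : 1 ≤ d) (h2n : 2 * n ≤ d * r) :
    2 * ((n + d - 1) / d) - 2 < r := by
  have h2 : d * ((n + d - 1) / d) ≤ n + d - 1 := dm_le hd
  have hm1 : 1 ≤ (n + d - 1) / d := by rw [ceil_div_aux hn hd]; exact Nat.le_add_left 1 _
  by_contra hcon
  push_neg at hcon
  have h3 : d * r ≤ d * (2 * ((n + d - 1) / d) - 2) := Nat.mul_le_mul_left d hcon
  have h4 : d * (2 * ((n + d - 1) / d) - 2) = 2 * (d * ((n + d - 1) / d)) - 2 * d := by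
    rw [Nat.mul_sub, Nat.mul_left_comm, Nat.mul_comm d 2]
  omega

end

/-- if `dr ≥ 2n`, `dr ≡ 0 (mod n)` and `r ≥ 3`, then
`diam(Q_n(d,r)) = n + max(⌊r/2⌋, 2⌈n/d⌉ − 2)`
(the diameter being the maximum of the distances over all pairs; here
`⌈n/d⌉ = (n + d − 1)/d`). -/
theorem stmt_18 (n d r : ℕ) (hn : 2 ≤ n) (hd : 1 ≤ d) (hdn : d ≤ n) (hr : 3 ≤ r)
    (h2n : 2 * n ≤ d * r) (hmod : (d * r) % n = 0) :
    (∀ u v : (Fin n → ZMod 2) × ZMod r,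
      (RCR n d r).dist u v ≤ n + max (r / 2) (2 * ((n + d - 1) / d) - 2)) ∧
    (∃ u v : (Fin n → ZMod 2) × ZMod r,
      (RCR n d r).dist u v = n + max (r / 2) (2 * ((n + d - 1) / d) - 2)) := by
  haveI : NeZero r := ⟨by omega⟩
  have hn1 : 1 ≤ n := by omega
  have hub : ∀ u v : (Fin n → ZMod 2) × ZMod r,
      (RCR n d r).dist u v ≤ n + max (r / 2) (2 * ((n + d - 1) / d) - 2) := by
    intro u v
    obtain ⟨W, hW⟩ := reach_le hn hd hr hmod u v
    exact le_trans (SimpleGraph.dist_le W) hW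
  refine ⟨hub, ?_⟩
  rcases le_or_gt (2 * ((n + d - 1) / d) - 2) (r / 2) with hcase | hcase
  · -- max is r/2
    refine ⟨((fun _ => 0), 0), ((fun _ => 1), ((r / 2 : ℕ) : ZMod r)), ?_⟩
    rw [max_eq_left hcase]
    set u : (Fin n → ZMod 2) × ZMod r := ((fun _ => 0), 0)
    set v : (Fin n → ZMod 2) × ZMod r := ((fun _ => 1), ((r / 2 : ℕ) : ZMod r))
    have hreach : (RCR n d r).Reachable u v := ⟨(reach_le hn hd hr hmod u v).choose⟩
    obtain ⟨W, hWl⟩ := hreach.exists_walk_length_eq_dist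
    have hle : (RCR n d r).dist u v ≤ n + r / 2 := by
      have := hub u v
      rwa [max_eq_left hcase] at this
    have hcube : n ≤ cubeCount W := by
      have h1 : ham (fun _ : Fin n => (0 : ZMod 2)) (fun _ => 1) ≤ cubeCount W :=
        ham_le_cubeCount hn1 hr W
      rwa [ham_zero_one hn1] at h1
    have hring : r / 2 ≤ ringCount W := by
      have h1 : min (((0 : ZMod r) - ((r / 2 : ℕ) : ZMod r)).val)
          ((((r / 2 : ℕ) : ZMod r) - (0 : ZMod r)).val) ≤ ringCount W :=
        lb_ring hn1 hr hmod W
      have hcval : ((r / 2 : ℕ) : ZMod r).val = r / 2 := by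
        rw [ZMod.val_natCast, Nat.mod_eq_of_lt (by omega)]
      have hcne : ((r / 2 : ℕ) : ZMod r) ≠ 0 := by
        intro hcon
        have := congrArg ZMod.val hcon
        rw [hcval, ZMod.val_zero] at this
        omega
      rw [sub_zero, zero_sub, ZMod.neg_val, if_neg hcne, hcval] at h1
      omega
    have hge : n + r / 2 ≤ (RCR n d r).dist u v := by
      rw [← hWl, length_eq_counts W]
      omega
    omega
  · -- max is 2*m-2
    refine ⟨((fun _ => 0), 0), ((fun _ => 1), 0), ?_⟩
    rw [max_eq_right (le_of_lt hcase)]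
    set u : (Fin n → ZMod 2) × ZMod r := ((fun _ => 0), 0)
    set v : (Fin n → ZMod 2) × ZMod r := ((fun _ => 1), 0)
    have hreach : (RCR n d r).Reachable u v := ⟨(reach_le hn hd hr hmod u v).choose⟩
    obtain ⟨W, hWl⟩ := hreach.exists_walk_length_eq_dist
    have hle : (RCR n d r).dist u v ≤ n + (2 * ((n + d - 1) / d) - 2) := by
      have := hub u v
      rwa [max_eq_right (le_of_lt hcase)] at this
    have hcube : n ≤ cubeCount W := by
      have h1 : ham (fun _ : Fin n => (0 : ZMod 2)) (fun _ => 1) ≤ cubeCount W :=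
        ham_le_cubeCount hn1 hr W
      rwa [ham_zero_one hn1] at h1
    have hring : 2 * ((n + d - 1) / d) - 2 ≤ ringCount W := by
      obtain ⟨lo, hi, s, hlo, hhi, hls, hsh, hcast, hbound, hflip⟩ :=
        ring_invariant hn1 hr hmod W
      have hcast0 : (s : ZMod r) = 0 := by rw [hcast]; exact sub_self _
      by_cases hs0 : s = 0
      · subst hs0
        have hex : ∀ k : Fin n, ∃ p : ℤ × ℕ,
            p ∈ (Finset.Icc lo hi ×ˢ Finset.Icc 1 d) ∧
            ((k : ℕ) : ZMod n) = ((p.2 : ℕ) : ZMod n)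
              + (d : ZMod n) * ((v.2.val : ℕ) : ZMod n)
              + (d : ZMod n) * ((p.1 : ℤ) : ZMod n) := by
          intro k
          have hk : u.1 k ≠ v.1 k := by
            show (0 : ZMod 2) ≠ 1
            decide
          obtain ⟨z, hz1, hz2, i, hi1, hi2, heq⟩ := hflip k hk
          exact ⟨(z, i), by
            rw [Finset.mem_product, Finset.mem_Icc, Finset.mem_Icc]
            exact ⟨⟨hz1, hz2⟩, hi1, hi2⟩, heq⟩
        choose f hf1 hf2 using hex
        have hinj : Set.InjOn f ↑(Finset.univ : Finset (Fin n)) := by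
          intro k _ k' _ hfe
          apply fin_cast_inj hn1
          rw [hf2 k, hf2 k', hfe]
        have hcard := Finset.card_le_card_of_injOn f (fun k _ => hf1 k) hinj
        rw [Finset.card_univ, Fintype.card_fin, Finset.card_product, Int.card_Icc,
          Nat.card_Icc] at hcard
        have hdd : d + 1 - 1 = d := by omega
        rw [hdd] at hcard
        have hH : (hi + 1 - lo).toNat = (hi - lo).toNat + 1 := by omega
        rw [hH] at hcard
        have hmH : (n + d - 1) / d ≤ (hi - lo).toNat + 1 := by
          rw [Nat.div_le_iff_le_mul_add_pred (by omega : 0 < d)]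
          have : ((hi - lo).toNat + 1) * d = d * ((hi - lo).toNat + 1) := by ring
          omega
        have hb2 : 2 * (hi - lo) ≤ (ringCount W : ℤ) := by omega
        omega
      · have hdvd : (r : ℤ) ∣ s := by
          rwa [ZMod.intCast_zmod_eq_zero_iff_dvd] at hcast0
        have hdvd2 : r ∣ s.natAbs := by
          have := Int.natAbs_dvd_natAbs.mpr hdvd
          simpa using this
        have hrle : r ≤ s.natAbs := Nat.le_of_dvd (by omega) hdvd2
        have hrle2 : (r : ℤ) ≤ hi - lo := by omega
        have hb : (hi - lo : ℤ) ≤ (ringCount W : ℤ) := by omega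
        have := r_ge (n := n) hn1 hd h2n
        omega
    have hge : n + (2 * ((n + d - 1) / d) - 2) ≤ (RCR n d r).dist u v := by
      rw [← hWl, length_eq_counts W]
      omega
    omega
end

section
/- Let n ≥ 4. The diameter of the cube-connected cycles network CC_n equals 2n if n = 3 and ⌊5n/2⌋ − 2 if n ≥ 4. -/
set_option linter.unusedSectionVars false

namespace CCC19x
variable {n : ℕ}

def dirZ (b : Bool) : ℤ := if b then 1 else -1
def psum (l : List Bool) (k : ℕ) : ℤ := ((l.take k).map dirZ).sum
@[simp] lemma psum_zero (l : List Bool) : psum l 0 = 0 := rfl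
lemma psum_replicate (A k : ℕ) (b : Bool) :
    psum (List.replicate A b) k = (min k A : ℤ) * dirZ b := by
  simp [psum, List.take_replicate, List.map_replicate, List.sum_replicate, nsmul_eq_mul]
lemma psum_append (l₁ l₂ : List Bool) (k : ℕ) :
    psum (l₁ ++ l₂) k = psum l₁ k + psum l₂ (k - l₁.length) := by
  simp [psum, List.take_append]

lemma valCast [NeZero n] (z : ZMod n) : ((z.val : ℕ) : ZMod n) = z :=
  ZMod.natCast_rightInverse z

def yval (n : ℕ) : ℕ := if n = 3 then 0 else n / 2
def yT (n : ℕ) : ZMod n := (yval n : ZMod n)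
def coverB (n : ℕ) : ℕ := if n = 3 then n else n + n / 2 - 2

def rpos (l : List Bool) (x : ZMod n) (k : ℕ) : ZMod n := x + ((psum l k : ℤ) : ZMod n)

@[simp] lemma rpos_zero (l : List Bool) (x : ZMod n) : rpos l x 0 = x := by simp [rpos]

def Covers (l : List Bool) (x : ZMod n) (S : Set (ZMod n)) : Prop :=
  ∀ r ∈ S, ∃ k ≤ l.length, rpos l x k = r

def IsRoute (l : List Bool) (x : ZMod n) (S : Set (ZMod n)) : Prop :=
  Covers l x S ∧ rpos l x l.length = yT n

def plan (n d : ℕ) : List Bool :=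
  if d = 0 then List.replicate n true
  else if d ≤ n / 2 then List.replicate (d - 1) true ++ List.replicate (n - 1) false
  else List.replicate (n - 1 - d) false ++ List.replicate (n - 1) true

lemma plan_spec (hn : 3 ≤ n) (x y : ZMod n) :
    (plan n (y - x).val).length ≤ coverB n ∧
    Covers (plan n (y - x).val) x Set.univ ∧
    rpos (plan n (y - x).val) x (plan n (y - x).val).length = y := by
  haveI : NeZero n := ⟨by omega⟩
  set d := (y - x).val with hdd
  have hdlt : d < n := ZMod.val_lt _
  have hdy : x + (d : ZMod n) = y := by
    rw [hdd, valCast]; ring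
  have hcB : n ≤ coverB n := by unfold coverB; split <;> omega
  by_cases h0 : d = 0
  · -- full loop
    have hxy : y = x := by
      have h := (ZMod.val_eq_zero (y - x)).mp (by rw [← hdd, h0])
      linear_combination h
    rw [plan, if_pos h0]
    refine ⟨by simpa using hcB, ?_, ?_⟩
    · intro r _
      refine ⟨(r - x).val, by simpa using (ZMod.val_lt (r - x)).le, ?_⟩
      have hps : psum (List.replicate n true) ((r - x).val) = ((r - x).val : ℤ) := by
        rw [psum_replicate]
        have := ZMod.val_lt (r - x)
        simp only [dirZ, if_true]
        omega
      rw [rpos, hps]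
      push_cast
      simp only [valCast]
      ring
    · have hps : psum (List.replicate n true) ((List.replicate n true : List Bool).length)
          = (n : ℤ) := by
        rw [psum_replicate]
        simp only [dirZ, if_true, List.length_replicate]
        omega
      rw [rpos, hps, hxy]
      push_cast
      rw [ZMod.natCast_self]
      ring
  · by_cases hB : d ≤ n / 2
    · -- plan B : up (d-1), down (n-1)
      rw [plan, if_neg h0, if_pos hB]
      have hlen : (List.replicate (d - 1) true ++ List.replicate (n - 1) false).length
          = (d - 1) + (n - 1) := by simp
      refine ⟨?_, ?_, ?_⟩
      · rw [hlen]; unfold coverB; split <;> omega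
      · intro r _
        set t := (r - x - (d : ZMod n)).val with ht
        have htlt : t < n := ZMod.val_lt _
        refine ⟨(d - 1) + (n - 1 - t), by omega, ?_⟩
        have hps : psum (List.replicate (d - 1) true ++ List.replicate (n - 1) false)
            ((d - 1) + (n - 1 - t)) = (d : ℤ) - (n : ℤ) + (t : ℤ) := by
          rw [psum_append, psum_replicate, psum_replicate]
          simp only [List.length_replicate, dirZ, if_true, Bool.false_eq_true, if_false,
            mul_one, mul_neg_one]
          omega
        rw [rpos, hps]
        push_cast
        rw [ZMod.natCast_self, ht]
        simp only [valCast]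
        ring
      · rw [hlen]
        have hps : psum (List.replicate (d - 1) true ++ List.replicate (n - 1) false)
            ((d - 1) + (n - 1)) = (d : ℤ) - (n : ℤ) := by
          rw [psum_append, psum_replicate, psum_replicate]
          simp only [List.length_replicate, dirZ, if_true, Bool.false_eq_true, if_false,
            mul_one, mul_neg_one]
          omega
        rw [rpos, hps]
        push_cast
        rw [ZMod.natCast_self, ← hdy]
        ring
    · -- plan A : down (n-1-d), up (n-1)
      rw [plan, if_neg h0, if_neg hB]
      have hlen : (List.replicate (n - 1 - d) false ++ List.replicate (n - 1) true).length
          = (n - 1 - d) + (n - 1) := by simp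
      refine ⟨?_, ?_, ?_⟩
      · rw [hlen]; unfold coverB; split <;> omega
      · intro r _
        set t := (r - x + ((n - 1 - d : ℕ) : ZMod n)).val with ht
        have htlt : t < n := ZMod.val_lt _
        refine ⟨(n - 1 - d) + t, by omega, ?_⟩
        have hps : psum (List.replicate (n - 1 - d) false ++ List.replicate (n - 1) true)
            ((n - 1 - d) + t) = (t : ℤ) - ((n - 1 - d : ℕ) : ℤ) := by
          rw [psum_append, psum_replicate, psum_replicate]
          simp only [List.length_replicate, dirZ, if_true, Bool.false_eq_true, if_false,
            mul_one, mul_neg_one]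
          omega
        rw [rpos, hps]
        push_cast
        rw [ht]
        simp only [valCast]
        ring
      · rw [hlen]
        have hps : psum (List.replicate (n - 1 - d) false ++ List.replicate (n - 1) true)
            ((n - 1 - d) + (n - 1)) = (d : ℤ) := by
          rw [psum_append, psum_replicate, psum_replicate]
          simp only [List.length_replicate, dirZ, if_true, Bool.false_eq_true, if_false,
            mul_one, mul_neg_one]
          omega
        rw [rpos, hps]
        push_cast
        exact hdy

lemma psum_cons (b : Bool) (l : List Bool) (k : ℕ) :
    psum (b :: l) (k + 1) = dirZ b + psum l k := by simp [psum]

lemma abs_dirZ (b : Bool) : |dirZ b| ≤ 1 := by cases b <;> simp [dirZ]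

lemma abs_psum_step (l : List Bool) (k : ℕ) : |psum l (k + 1) - psum l k| ≤ 1 := by
  induction l generalizing k with
  | nil => simp [psum]
  | cons b t ih =>
    cases k with
    | zero => simpa [psum_cons] using abs_dirZ b
    | succ k => simpa [psum_cons] using ih k

lemma abs_psum_le (l : List Bool) (i j : ℕ) (hij : i ≤ j) :
    |psum l j - psum l i| ≤ (j : ℤ) - i := by
  induction j, hij using Nat.le_induction with
  | base => simp
  | succ j hij ih =>
    have h1 := abs_psum_step l j
    have h2 := abs_sub_le (psum l (j + 1)) (psum l j) (psum l i)
    push_cast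
    push_cast at ih
    linarith

lemma rpos_cons (b : Bool) (l : List Bool) (x : ZMod n) (k : ℕ) :
    rpos (b :: l) x (k + 1) = rpos l (x + ((dirZ b : ℤ) : ZMod n)) k := by
  simp only [rpos, psum_cons]
  push_cast
  ring

def routeSet (x : ZMod n) (S : Set (ZMod n)) : Set ℕ :=
  {m | ∃ l : List Bool, IsRoute l x S ∧ l.length = m}

noncomputable def g (x : ZMod n) (S : Set (ZMod n)) : ℕ := sInf (routeSet x S)

lemma covers_mono {l : List Bool} {x : ZMod n} {S T : Set (ZMod n)} (h : S ⊆ T)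
    (hc : Covers l x T) : Covers l x S := fun r hr => hc r (h hr)

lemma routeSet_nonempty (hn : 3 ≤ n) (x : ZMod n) (S : Set (ZMod n)) :
    (routeSet x S).Nonempty := by
  obtain ⟨_, hcov, hend⟩ := plan_spec hn x (yT n)
  exact ⟨(plan n (yT n - x).val).length,
    ⟨plan n (yT n - x).val, ⟨covers_mono (Set.subset_univ S) hcov, hend⟩, rfl⟩⟩

lemma g_le {l : List Bool} {x : ZMod n} {S : Set (ZMod n)} (h : IsRoute l x S) :
    g x S ≤ l.length := Nat.sInf_le ⟨l, h, rfl⟩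

lemma g_spec (hn : 3 ≤ n) (x : ZMod n) (S : Set (ZMod n)) :
    ∃ l : List Bool, IsRoute l x S ∧ l.length = g x S :=
  Nat.sInf_mem (routeSet_nonempty hn x S)

lemma g_mono (hn : 3 ≤ n) {x : ZMod n} {S T : Set (ZMod n)} (h : S ⊆ T) :
    g x S ≤ g x T := by
  obtain ⟨l, ⟨hc, he⟩, hl⟩ := g_spec hn x T
  exact hl ▸ g_le ⟨covers_mono h hc, he⟩

lemma g_diff (hn : 3 ≤ n) (x : ZMod n) (S : Set (ZMod n)) :
    g x S ≤ g x (S \ {x}) := by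
  obtain ⟨l, ⟨hc, he⟩, hl⟩ := g_spec hn x (S \ {x})
  refine hl ▸ g_le ⟨?_, he⟩
  intro r hr
  by_cases hrx : r = x
  · exact ⟨0, Nat.zero_le _, by simp [hrx]⟩
  · exact hc r ⟨hr, hrx⟩

lemma g_step (hn : 3 ≤ n) (b : Bool) (x : ZMod n) (S : Set (ZMod n)) :
    g x S ≤ g (x + ((dirZ b : ℤ) : ZMod n)) S + 1 := by
  obtain ⟨l, ⟨hc, he⟩, hl⟩ := g_spec hn (x + ((dirZ b : ℤ) : ZMod n)) S
  have hroute : IsRoute (b :: l) x S := by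
    constructor
    · intro r hr
      obtain ⟨k, hk, hrk⟩ := hc r hr
      exact ⟨k + 1, by simp; omega, by rw [rpos_cons]; exact hrk⟩
    · show rpos (b :: l) x (b :: l).length = yT n
      rw [List.length_cons, rpos_cons]
      exact he
  have := g_le hroute
  simp only [List.length_cons] at this
  omega

lemma final_arith (L : ℕ) (hn : 3 ≤ n) (p k : ℤ)
    (hk : p - (yval n : ℤ) = n * k)
    (h1 : 2 * (n : ℤ) - 2 + p ≤ L ∨ 2 * (n : ℤ) - 2 - p ≤ L)
    (h2 : p ≤ L) (h3 : -p ≤ L) : coverB n ≤ L := by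
  have hnn : (0 : ℤ) ≤ (n : ℤ) := by positivity
  rcases lt_trichotomy k 0 with hneg | rfl | hpos
  · rcases eq_or_lt_of_le (by omega : k ≤ -1) with heq | hlt
    · -- k = -1
      have hp : p - (yval n : ℤ) = -n := by rw [hk, heq]; ring
      clear hk
      by_cases hn3 : n = 3
      · subst hn3; simp [coverB, yval] at *; omega
      · simp only [coverB, yval, if_neg hn3] at *; omega
    · -- k ≤ -2
      have hb : (n : ℤ) * k ≤ (n : ℤ) * (-2) :=
        mul_le_mul_of_nonneg_left (by omega) hnn
      have hp : p ≤ (yval n : ℤ) - 2 * n := by linarith [hk]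
      clear hk hb
      by_cases hn3 : n = 3
      · subst hn3; simp [coverB, yval] at *; omega
      · simp only [coverB, yval, if_neg hn3] at *; omega
  · have hp : p = (yval n : ℤ) := by linarith [hk]
    clear hk
    by_cases hn3 : n = 3
    · subst hn3; simp [coverB, yval] at *; omega
    · simp only [coverB, yval, if_neg hn3] at *; omega
  · have hb : (n : ℤ) * 1 ≤ (n : ℤ) * k := mul_le_mul_of_nonneg_left (by omega) hnn
    have hp : (yval n : ℤ) + n ≤ p := by linarith [hk]
    clear hk hb
    by_cases hn3 : n = 3
    · subst hn3; simp [coverB, yval] at *; omega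
    · simp only [coverB, yval, if_neg hn3] at *; omega

lemma route_lb (hn : 3 ≤ n) (l : List Bool) (h : IsRoute l (0 : ZMod n) Set.univ) :
    coverB n ≤ l.length := by
  haveI : NeZero n := ⟨by omega⟩
  obtain ⟨hcov, hend⟩ := h
  set L := l.length with hLdef
  have hne : (Finset.range (L + 1)).Nonempty := ⟨0, by simp⟩
  obtain ⟨kR, hkR, hmax⟩ := Finset.exists_max_image (Finset.range (L + 1)) (psum l) hne
  obtain ⟨km, hkm, hmin⟩ := Finset.exists_min_image (Finset.range (L + 1)) (psum l) hne
  have hkRL : kR ≤ L := Nat.lt_succ_iff.mp (Finset.mem_range.mp hkR)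
  have hkmL : km ≤ L := Nat.lt_succ_iff.mp (Finset.mem_range.mp hkm)
  have h0R : (0 : ℤ) ≤ psum l kR := by
    have := hmax 0 (by simp); simpa using this
  have hm0 : psum l km ≤ 0 := by
    have := hmin 0 (by simp); simpa using this
  -- coverage forces the spread to be at least n - 1
  have hcard : (n : ℤ) ≤ psum l kR - psum l km + 1 := by
    set T : Finset ℤ := (Finset.range (L + 1)).image (psum l) with hT
    have hsub : T ⊆ Finset.Icc (psum l km) (psum l kR) := by
      intro v hv
      obtain ⟨k, hk, rfl⟩ := Finset.mem_image.mp hv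
      exact Finset.mem_Icc.mpr ⟨hmin k hk, hmax k hk⟩
    have himg : T.image (fun v : ℤ => (v : ZMod n)) = Finset.univ := by
      apply Finset.eq_univ_of_forall
      intro r
      obtain ⟨k, hk, hr⟩ := hcov r trivial
      refine Finset.mem_image.mpr ⟨psum l k,
        Finset.mem_image.mpr ⟨k, Finset.mem_range.mpr (by omega), rfl⟩, ?_⟩
      simpa [rpos] using hr
    have h1 : n ≤ T.card := by
      calc n = Fintype.card (ZMod n) := (ZMod.card n).symm
        _ = (Finset.univ : Finset (ZMod n)).card := (Finset.card_univ).symm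
        _ = (T.image (fun v : ℤ => (v : ZMod n))).card := by rw [himg]
        _ ≤ T.card := Finset.card_image_le
    have h2 : T.card ≤ (Finset.Icc (psum l km) (psum l kR)).card :=
      Finset.card_le_card hsub
    rw [Int.card_Icc] at h2
    omega
  have hpy : ((psum l L : ℤ) : ZMod n) = yT n := by
    have := hend
    rw [rpos] at this
    simpa using this
  set p := psum l L with hp
  have hdvd : (n : ℤ) ∣ (p - (yval n : ℤ)) := by
    rw [← ZMod.intCast_zmod_eq_zero_iff_dvd]
    push_cast
    rw [hpy, yT]
    ring
  obtain ⟨k, hk⟩ := hdvd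
  have hpL : |p| ≤ (L : ℤ) := by simpa using abs_psum_le l 0 L (Nat.zero_le L)
  have hmain : 2 * (n : ℤ) - 2 + p ≤ L ∨ 2 * (n : ℤ) - 2 - p ≤ L := by
    rcases le_total kR km with hc | hc
    · left
      have b1 := abs_psum_le l 0 kR (Nat.zero_le kR)
      have b2 := abs_psum_le l kR km hc
      have b3 := abs_psum_le l km L hkmL
      rw [abs_le] at b1 b2 b3
      simp only [psum_zero, sub_zero] at b1
      push_cast at b1 b2 b3 ⊢
      omega
    · right
      have b1 := abs_psum_le l 0 km (Nat.zero_le km)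
      have b2 := abs_psum_le l km kR hc
      have b3 := abs_psum_le l kR L hkRL
      rw [abs_le] at b1 b2 b3
      simp only [psum_zero, sub_zero] at b1
      push_cast at b1 b2 b3 ⊢
      omega
  rw [abs_le] at hpL
  exact final_arith L hn p k (by linarith [hk]) hmain (by omega) (by omega)


abbrev V (n : ℕ) := (Fin n → ZMod 2) × ZMod n

section withN
variable [NeZero n]

def zfin (z : ZMod n) : Fin n := ⟨z.val, ZMod.val_lt z⟩

@[simp] lemma natCast_zfin (z : ZMod n) : (((zfin z : Fin n) : ℕ) : ZMod n) = z := valCast z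

lemma zfin_natCast (k : Fin n) : zfin ((k : ℕ) : ZMod n) = k := by
  ext
  simp [zfin, ZMod.val_cast_of_lt k.isLt]

lemma zfin_inj {a b : ZMod n} (h : zfin a = zfin b) : a = b := by
  have := congrArg (fun k : Fin n => ((k : ℕ) : ZMod n)) h
  simpa using this

lemma Ebasis_self (j : ZMod n) : Ebasis n j (zfin j) = 1 := by simp [Ebasis]

lemma Ebasis_ne (j : ZMod n) (k : Fin n) (h : k ≠ zfin j) : Ebasis n j k = 0 := by
  have hne : ¬(((k : ℕ) : ZMod n) = j) := by
    intro hc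
    exact h (by rw [← hc, zfin_natCast])
  simp [Ebasis, hne]

lemma zmod2_fix {u v : ZMod 2} (h : u ≠ v) : u + 1 = v := by revert h; revert u v; decide

lemma zmod2_succ_ne (u : ZMod 2) : u + 1 ≠ u := by revert u; decide

lemma flip_apply (a : Fin n → ZMod 2) (x z : ZMod n) :
    (a + Ebasis n (1 + x)) (zfin (1 + z)) =
      if z = x then a (zfin (1 + z)) + 1 else a (zfin (1 + z)) := by
  split
  case isTrue h => subst h; rw [Pi.add_apply, Ebasis_self]
  case isFalse h =>
    rw [Pi.add_apply, Ebasis_ne, add_zero]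
    intro hc
    exact h (by have := zfin_inj hc; exact add_left_cancel this)

def mset (b a : Fin n → ZMod 2) : Finset (Fin n) := Finset.univ.filter (fun k => a k ≠ b k)

lemma mem_mset {b a : Fin n → ZMod 2} {k : Fin n} : k ∈ mset b a ↔ a k ≠ b k := by
  simp [mset]

lemma mset_flip_mem {b a : Fin n → ZMod 2} {x : ZMod n} (h : zfin (1 + x) ∈ mset b a) :
    mset b (a + Ebasis n (1 + x)) = (mset b a).erase (zfin (1 + x)) := by
  ext k
  rw [mem_mset, Finset.mem_erase, mem_mset]
  by_cases hk : k = zfin (1 + x)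
  · subst hk
    rw [Pi.add_apply, Ebasis_self]
    rw [mem_mset] at h
    constructor
    · intro hc; exact absurd (zmod2_fix h) hc
    · rintro ⟨hc, -⟩; exact absurd rfl hc
  · rw [Pi.add_apply, Ebasis_ne _ _ hk, add_zero]
    tauto

lemma mset_flip_not {b a : Fin n → ZMod 2} {x : ZMod n} (h : zfin (1 + x) ∉ mset b a) :
    mset b (a + Ebasis n (1 + x)) = insert (zfin (1 + x)) (mset b a) := by
  ext k
  rw [mem_mset, Finset.mem_insert, mem_mset]
  by_cases hk : k = zfin (1 + x)
  · subst hk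
    rw [Pi.add_apply, Ebasis_self]
    rw [mem_mset, not_not] at h
    constructor
    · intro _; exact Or.inl rfl
    · intro _
      rw [h]
      exact zmod2_succ_ne _
  · rw [Pi.add_apply, Ebasis_ne _ _ hk, add_zero]
    tauto

def sset (b a : Fin n → ZMod 2) : Set (ZMod n) :=
  {z | a (zfin (1 + z)) ≠ b (zfin (1 + z))}

lemma sset_mem_iff {b a : Fin n → ZMod 2} {x : ZMod n} :
    x ∈ sset b a ↔ zfin (1 + x) ∈ mset b a := by
  simp [sset, mem_mset]

lemma sset_flip_mem {b a : Fin n → ZMod 2} {x : ZMod n} (h : x ∈ sset b a) :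
    sset b (a + Ebasis n (1 + x)) = sset b a \ {x} := by
  ext z
  simp only [sset, Set.mem_setOf_eq, Set.mem_diff, Set.mem_singleton_iff]
  rw [flip_apply]
  split
  case isTrue hz =>
    subst hz
    simp only [sset, Set.mem_setOf_eq] at h
    constructor
    · intro hc; exact absurd (zmod2_fix h) hc
    · rintro ⟨-, hc⟩; exact absurd rfl hc
  case isFalse hz => tauto

lemma sset_flip_not {b a : Fin n → ZMod 2} {x : ZMod n} (h : x ∉ sset b a) :
    sset b (a + Ebasis n (1 + x)) = insert x (sset b a) := by
  ext z
  simp only [sset, Set.mem_setOf_eq, Set.mem_insert_iff]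
  rw [flip_apply]
  split
  case isTrue hz =>
    subst hz
    simp only [sset, Set.mem_setOf_eq, not_not] at h
    constructor
    · intro _; exact Or.inl rfl
    · intro _; rw [h]; exact zmod2_succ_ne _
  case isFalse hz => tauto

noncomputable def pot (p : V n) : ℕ :=
  (mset (fun _ => 1) p.1).card + g p.2 (sset (fun _ => 1) p.1)

lemma pot_flip_le (hn : 3 ≤ n) (a : Fin n → ZMod 2) (x : ZMod n) :
    pot (a, x) ≤ pot (a + Ebasis n (1 + x), x) + 1 := by
  by_cases hm : x ∈ sset (fun _ => (1 : ZMod 2)) a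
  · simp only [pot]
    rw [sset_flip_mem hm, mset_flip_mem (sset_mem_iff.mp hm)]
    have h1 : g x (sset (fun _ => (1:ZMod 2)) a) ≤ g x (sset (fun _ => (1:ZMod 2)) a \ {x}) :=
      g_diff hn _ _
    have h2 : 0 < (mset (fun _ => (1:ZMod 2)) a).card :=
      Finset.card_pos.mpr ⟨_, sset_mem_iff.mp hm⟩
    rw [Finset.card_erase_of_mem (sset_mem_iff.mp hm)]
    omega
  · simp only [pot]
    rw [sset_flip_not hm, mset_flip_not (fun hc => hm (sset_mem_iff.mpr hc))]
    have h1 : g x (sset (fun _ => (1:ZMod 2)) a) ≤ g x (insert x (sset (fun _ => (1:ZMod 2)) a)) :=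
      g_mono hn (Set.subset_insert _ _)
    rw [Finset.card_insert_of_notMem (fun hc => hm (sset_mem_iff.mpr hc))]
    omega

lemma pot_rot_le (hn : 3 ≤ n) (a : Fin n → ZMod 2) (x : ZMod n) :
    pot (a, x) ≤ pot (a, x + 1) + 1 := by
  simp only [pot]
  have := g_step hn true x (sset (fun _ => (1:ZMod 2)) a)
  simp only [dirZ, if_true, Int.cast_one] at this
  omega

lemma pot_rot_le' (hn : 3 ≤ n) (a : Fin n → ZMod 2) (x : ZMod n) :
    pot (a, x + 1) ≤ pot (a, x) + 1 := by
  simp only [pot]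
  have := g_step hn false (x + 1) (sset (fun _ => (1:ZMod 2)) a)
  have hx : (x + 1) + (((dirZ false : ℤ)) : ZMod n) = x := by
    simp [dirZ]
  rw [hx] at this
  omega

lemma pot_lip (hn : 3 ≤ n) {p q : V n} (h : (CCC n).Adj p q) : pot p ≤ pot q + 1 := by
  simp only [CCC, SimpleGraph.fromRel_adj] at h
  obtain ⟨hne, h | h⟩ := h
  · rcases h with ⟨h1, h2⟩ | ⟨h1, h2⟩
    · have hq : q = (p.1, p.2 + 1) := Prod.ext h1.symm h2
      rw [hq]
      have := pot_rot_le hn p.1 p.2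
      simpa using this
    · have hc : ((p.2.val : ℕ) : ZMod n) = p.2 := valCast _
      have hq : q = (p.1 + Ebasis n (1 + p.2), p.2) := by
        rw [hc] at h2
        exact Prod.ext h2 h1.symm
      rw [hq]
      have := pot_flip_le hn p.1 p.2
      simpa using this
  · rcases h with ⟨h1, h2⟩ | ⟨h1, h2⟩
    · have hp : p = (q.1, q.2 + 1) := Prod.ext h1.symm h2
      rw [hp]
      have := pot_rot_le' hn q.1 q.2
      simpa using this
    · have hc : ((q.2.val : ℕ) : ZMod n) = q.2 := valCast _
      rw [hc] at h2
      -- h1 : q.2 = p.2, h2 : p.1 = q.1 + Ebasis n (1 + q.2)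
      have hEE : q.1 = p.1 + Ebasis n (1 + p.2) := by
        rw [h2, ← h1]
        funext k
        simp only [Pi.add_apply]
        have : ∀ u v : ZMod 2, u = u + v + v := by decide
        exact this _ _
      have hq : q = (p.1 + Ebasis n (1 + p.2), p.2) := Prod.ext hEE h1
      rw [hq]
      have := pot_flip_le hn p.1 p.2
      simpa using this

lemma pot_walk (hn : 3 ≤ n) {p q : V n} (w : (CCC n).Walk p q) :
    pot p ≤ pot q + w.length := by
  induction w with
  | nil => simp
  | cons hadj w ih =>
    have := pot_lip hn hadj
    rw [SimpleGraph.Walk.length_cons]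
    omega

def zdir (b : Bool) : ZMod n := if b then 1 else -1

lemma cast_dirZ (b : Bool) : ((dirZ b : ℤ) : ZMod n) = zdir b := by
  cases b <;> simp [dirZ, zdir]

def patch (b : Fin n → ZMod 2) (p : V n) : V n :=
  if p.1 (zfin (1 + p.2)) = b (zfin (1 + p.2)) then p
  else (p.1 + Ebasis n (1 + p.2), p.2)

def exec (b : Fin n → ZMod 2) : List Bool → V n → V n
  | [], p => patch b p
  | t :: ts, p => exec b ts ((patch b p).1, p.2 + zdir t)

lemma patch_snd (b : Fin n → ZMod 2) (p : V n) : (patch b p).2 = p.2 := by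
  rw [patch]; split <;> rfl

lemma patch_self (b : Fin n → ZMod 2) (p : V n) :
    (patch b p).1 (zfin (1 + p.2)) = b (zfin (1 + p.2)) := by
  rw [patch]
  split
  case isTrue h => exact h
  case isFalse h =>
    show (p.1 + Ebasis n (1 + p.2)) _ = _
    rw [Pi.add_apply, Ebasis_self]
    exact zmod2_fix h

lemma patch_keep (b : Fin n → ZMod 2) (p : V n) (k : Fin n) (h : p.1 k = b k) :
    (patch b p).1 k = b k := by
  rw [patch]
  split
  case isTrue _ => exact h
  case isFalse hcond =>
    show (p.1 + Ebasis n (1 + p.2)) k = b k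
    by_cases hk : k = zfin (1 + p.2)
    · exact absurd (hk ▸ h) hcond
    · rw [Pi.add_apply, Ebasis_ne _ _ hk, add_zero]; exact h

lemma exec_snd (b : Fin n → ZMod 2) (l : List Bool) (p : V n) :
    (exec b l p).2 = rpos l p.2 l.length := by
  induction l generalizing p with
  | nil =>
    show (patch b p).2 = _
    rw [patch_snd]
    simp
  | cons t ts ih =>
    show (exec b ts ((patch b p).1, p.2 + zdir t)).2 = _
    rw [ih]
    rw [List.length_cons, rpos_cons, cast_dirZ]

lemma exec_keep (b : Fin n → ZMod 2) (l : List Bool) (p : V n) (k : Fin n)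
    (h : p.1 k = b k) : (exec b l p).1 k = b k := by
  induction l generalizing p with
  | nil => exact patch_keep b p k h
  | cons t ts ih => exact ih _ (patch_keep b p k h)

lemma exec_visited (b : Fin n → ZMod 2) (l : List Bool) (p : V n) (k : Fin n)
    (h : ∃ j ≤ l.length, 1 + rpos l p.2 j = ((k : ℕ) : ZMod n)) :
    (exec b l p).1 k = b k := by
  induction l generalizing p with
  | nil =>
    obtain ⟨j, hj, hjk⟩ := h
    have hj0 : j = 0 := Nat.le_zero.mp hj
    subst hj0
    rw [rpos_zero] at hjk
    have hk : k = zfin (1 + p.2) := by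
      rw [hjk, zfin_natCast]
    rw [hk]
    exact patch_self b p
  | cons t ts ih =>
    obtain ⟨j, hj, hjk⟩ := h
    cases j with
    | zero =>
      rw [rpos_zero] at hjk
      have hk : k = zfin (1 + p.2) := by
        rw [hjk, zfin_natCast]
      show (exec b ts ((patch b p).1, p.2 + zdir t)).1 k = b k
      apply exec_keep
      show (patch b p).1 k = b k
      rw [hk]
      exact patch_self b p
    | succ j =>
      rw [rpos_cons, cast_dirZ] at hjk
      exact ih ((patch b p).1, p.2 + zdir t) ⟨j, by simpa using hj, hjk⟩

lemma one_ne_zero_zmod (hn : 3 ≤ n) : (1 : ZMod n) ≠ 0 := by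
  haveI : Fact (1 < n) := ⟨by omega⟩
  exact one_ne_zero

lemma adj_flip (a : Fin n → ZMod 2) (x : ZMod n) :
    (CCC n).Adj (a, x) (a + Ebasis n (1 + x), x) := by
  simp only [CCC, SimpleGraph.fromRel_adj]
  constructor
  · intro hc
    have h1 := congrFun (congrArg Prod.fst hc) (zfin (1 + x))
    simp only [Pi.add_apply, Ebasis_self] at h1
    exact zmod2_succ_ne _ h1.symm
  · left
    right
    refine ⟨rfl, ?_⟩
    show a + Ebasis n (1 + x) = a + Ebasis n (1 + ((x.val : ℕ) : ZMod n))
    rw [valCast]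

lemma adj_rot (hn : 3 ≤ n) (a : Fin n → ZMod 2) (x : ZMod n) :
    (CCC n).Adj (a, x) (a, x + 1) := by
  simp only [CCC, SimpleGraph.fromRel_adj]
  constructor
  · intro hc
    have h1 := congrArg Prod.snd hc
    simp only at h1
    exact one_ne_zero_zmod hn (left_eq_add.mp h1)
  · exact Or.inl (Or.inl ⟨rfl, rfl⟩)

lemma adj_zdir (hn : 3 ≤ n) (a : Fin n → ZMod 2) (x : ZMod n) (t : Bool) :
    (CCC n).Adj (a, x) (a, x + zdir t) := by
  cases t
  · have h2 : (x - 1) + 1 = x := by ring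
    have h3 : x + zdir false = x - 1 := by
      show x + (-1 : ZMod n) = x - 1
      ring
    rw [h3]
    have := (adj_rot hn a (x - 1)).symm
    rwa [h2] at this
  · show (CCC n).Adj (a, x) (a, x + 1)
    exact adj_rot hn a x

lemma exec_walk (hn : 3 ≤ n) (b : Fin n → ZMod 2) (l : List Bool) (p : V n) :
    ∃ w : (CCC n).Walk p (exec b l p), w.length ≤ l.length + (mset b p.1).card := by
  induction l generalizing p with
  | nil =>
    by_cases hc : p.1 (zfin (1 + p.2)) = b (zfin (1 + p.2))
    · have he : exec b [] p = p := by
        show patch b p = p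
        rw [patch, if_pos hc]
      exact ⟨(SimpleGraph.Walk.nil).copy rfl he.symm, by simp⟩
    · have he : exec b [] p = (p.1 + Ebasis n (1 + p.2), p.2) := by
        show patch b p = _
        rw [patch, if_neg hc]
      have hmem : zfin (1 + p.2) ∈ mset b p.1 := mem_mset.mpr hc
      refine ⟨((SimpleGraph.Walk.cons (adj_flip p.1 p.2) SimpleGraph.Walk.nil).copy rfl
        he.symm), ?_⟩
      rw [SimpleGraph.Walk.length_copy, SimpleGraph.Walk.length_cons,
        SimpleGraph.Walk.length_nil]
      have : 0 < (mset b p.1).card := Finset.card_pos.mpr ⟨_, hmem⟩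
      omega
  | cons t ts ih =>
    have he : exec b (t :: ts) p = exec b ts ((patch b p).1, p.2 + zdir t) := rfl
    obtain ⟨w2, hw2⟩ := ih ((patch b p).1, p.2 + zdir t)
    by_cases hc : p.1 (zfin (1 + p.2)) = b (zfin (1 + p.2))
    · have hmid1 : (patch b p).1 = p.1 := by rw [patch, if_pos hc]
      have hadj : (CCC n).Adj p ((patch b p).1, p.2 + zdir t) := by
        rw [hmid1]
        exact adj_zdir hn p.1 p.2 t
      refine ⟨(SimpleGraph.Walk.cons hadj w2).copy rfl he.symm, ?_⟩
      rw [SimpleGraph.Walk.length_copy, SimpleGraph.Walk.length_cons]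
      have hw2' : w2.length ≤ ts.length + (mset b ((patch b p).1)).card := hw2
      have hcard : (mset b ((patch b p).1)).card = (mset b p.1).card := by rw [hmid1]
      rw [List.length_cons]
      omega
    · have hmid1 : (patch b p).1 = p.1 + Ebasis n (1 + p.2) := by rw [patch, if_neg hc]
      have hmem : zfin (1 + p.2) ∈ mset b p.1 := mem_mset.mpr hc
      have hadj1 : (CCC n).Adj p (p.1 + Ebasis n (1 + p.2), p.2) := adj_flip p.1 p.2
      have hadj2 : (CCC n).Adj (p.1 + Ebasis n (1 + p.2), p.2)
          ((patch b p).1, p.2 + zdir t) := by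
        rw [hmid1]
        exact adj_zdir hn (p.1 + Ebasis n (1 + p.2)) p.2 t
      refine ⟨(SimpleGraph.Walk.cons hadj1 (SimpleGraph.Walk.cons hadj2 w2)).copy rfl
        he.symm, ?_⟩
      rw [SimpleGraph.Walk.length_copy, SimpleGraph.Walk.length_cons,
        SimpleGraph.Walk.length_cons]
      have hw2' : w2.length ≤ ts.length + (mset b ((patch b p).1)).card := hw2
      have hcard : (mset b ((patch b p).1)).card = (mset b p.1).card - 1 := by
        rw [hmid1, mset_flip_mem hmem, Finset.card_erase_of_mem hmem]
      have : 0 < (mset b p.1).card := Finset.card_pos.mpr ⟨_, hmem⟩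
      rw [List.length_cons]
      omega

lemma exec_eq (hn : 3 ≤ n) (u v : V n) :
    exec v.1 (plan n (v.2 - u.2).val) u = v := by
  obtain ⟨-, hcov, hend⟩ := plan_spec hn u.2 v.2
  apply Prod.ext
  · funext k
    apply exec_visited
    obtain ⟨j, hj, hjk⟩ := hcov (((k : ℕ) : ZMod n) - 1) trivial
    exact ⟨j, hj, by rw [hjk]; ring⟩
  · rw [exec_snd, hend]

lemma exists_short_walk (hn : 3 ≤ n) (u v : V n) :
    ∃ w : (CCC n).Walk u v, w.length ≤ coverB n + n := by
  obtain ⟨w, hw⟩ := exec_walk hn v.1 (plan n (v.2 - u.2).val) u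
  obtain ⟨hlen, -, -⟩ := plan_spec hn u.2 v.2
  refine ⟨w.copy rfl (exec_eq hn u v), ?_⟩
  rw [SimpleGraph.Walk.length_copy]
  have hcard : (mset v.1 u.1).card ≤ n := by
    calc (mset v.1 u.1).card ≤ (Finset.univ : Finset (Fin n)).card :=
          Finset.card_filter_le _ _
      _ = n := by simp
  omega

end withN

end CCC19x


/-- the diameter of the cube-connected cycles `CC_n` equals
`2n` if `n = 3` and `⌊5n/2⌋ − 2` if `n ≥ 4`. -/
theorem stmt_19 (n : ℕ) (hn : 3 ≤ n) :
    (∀ u v : (Fin n → ZMod 2) × ZMod n,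
      (CCC n).dist u v ≤ (if n = 3 then 2 * n else 5 * n / 2 - 2)) ∧
    (∃ u v : (Fin n → ZMod 2) × ZMod n,
      (CCC n).dist u v = (if n = 3 then 2 * n else 5 * n / 2 - 2)) := by
  haveI : NeZero n := ⟨by omega⟩
  have hD : (if n = 3 then 2 * n else 5 * n / 2 - 2) = CCC19x.coverB n + n := by
    by_cases h3 : n = 3
    · subst h3; simp [CCC19x.coverB]
    · simp only [CCC19x.coverB, if_neg h3]
      omega
  constructor
  · intro u v
    obtain ⟨w, hw⟩ := CCC19x.exists_short_walk hn u v
    rw [hD]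
    exact le_trans (SimpleGraph.dist_le w) hw
  · refine ⟨(fun _ => 0, 0), (fun _ => 1, CCC19x.yT n), ?_⟩
    have hub : (CCC n).dist (fun _ => 0, 0) (fun _ => 1, CCC19x.yT n)
        ≤ CCC19x.coverB n + n := by
      obtain ⟨w, hw⟩ := CCC19x.exists_short_walk hn (fun _ => 0, 0) (fun _ => 1, CCC19x.yT n)
      exact le_trans (SimpleGraph.dist_le w) hw
    have hreach : (CCC n).Reachable (fun _ => 0, 0) (fun _ => 1, CCC19x.yT n) := by
      obtain ⟨w, -⟩ := CCC19x.exists_short_walk hn (fun _ => 0, 0) (fun _ => 1, CCC19x.yT n)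
      exact ⟨w⟩
    obtain ⟨w, hwlen⟩ := hreach.exists_walk_length_eq_dist
    have hpot := CCC19x.pot_walk hn w
    have hpotv : CCC19x.pot ((fun _ => 1, CCC19x.yT n) : CCC19x.V n) = 0 := by
      have hms : CCC19x.mset (fun _ => (1 : ZMod 2)) (fun _ => (1 : ZMod 2)) = (∅ : Finset (Fin n)) := by
        ext k; simp [CCC19x.mset]
      have hss : CCC19x.sset (fun _ => (1 : ZMod 2)) (fun _ => (1 : ZMod 2)) = (∅ : Set (ZMod n)) := by
        ext z; simp [CCC19x.sset]
      simp only [CCC19x.pot, hms, hss, Finset.card_empty]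
      have hroute : CCC19x.IsRoute ([] : List Bool) (CCC19x.yT n) (∅ : Set (ZMod n)) :=
        ⟨fun r hr => absurd hr (Set.notMem_empty r), by simp⟩
      have h0 : CCC19x.g (CCC19x.yT n) (∅ : Set (ZMod n)) ≤ 0 := by
        simpa using CCC19x.g_le hroute
      omega
    have hpotu : CCC19x.coverB n + n ≤ CCC19x.pot ((fun _ => 0, 0) : CCC19x.V n) := by
      have hms : CCC19x.mset (fun _ => (1 : ZMod 2)) (fun _ => (0 : ZMod 2)) = (Finset.univ : Finset (Fin n)) := by
        ext k; simp [CCC19x.mset]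
      have hss : CCC19x.sset (fun _ => (1 : ZMod 2)) (fun _ => (0 : ZMod 2)) = (Set.univ : Set (ZMod n)) := by
        ext z; simp [CCC19x.sset]
      have hg : CCC19x.coverB n ≤ CCC19x.g (0 : ZMod n) Set.univ := by
        obtain ⟨l, hroute, hl⟩ := CCC19x.g_spec hn 0 Set.univ
        exact hl ▸ CCC19x.route_lb hn l hroute
      simp only [CCC19x.pot, hms, hss, Finset.card_univ, Fintype.card_fin]
      omega
    rw [hD]
    omega
end
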